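/- arXiv:1907.06815 — 2 statements merged into one kernel-verified Lean document; each statement's English description precedes it below -/
import Mathlib

section
/- Let E and F be maximal sets in the Schreier family S_α of order α (for any countable ordinal α, with a fixed choice of approximating sequences at limit ordinals). If F is a spreading of E, then min E = min F. -/
/-- The Schreier family: the empty set together with all finite nonempty sets `F` of
positive integers with `|F| ≤ min F`. -/
def Schreier : Set (Finset ℕ) :=
  {F | F = ∅ ∨ ∃ h : F.Nonempty, (∀ n ∈ F, 0 < n) ∧ F.card ≤ F.min' h}

/-- A family of finite subsets of `ℕ` is hereditary if it is closed under subsets. -/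
def Hereditary (𝓕 : Set (Finset ℕ)) : Prop := ∀ F ∈ 𝓕, ∀ E ⊆ F, E ∈ 𝓕

/-- A family is spreading if it is stable under moving elements to the right. -/
def Spreading (𝓕 : Set (Finset ℕ)) : Prop :=
  ∀ F ∈ 𝓕, ∀ σ : ℕ → ℕ, (∀ n ∈ F, n ≤ σ n) →
    (∀ m ∈ F, ∀ n ∈ F, m < n → σ m < σ n) → F.image σ ∈ 𝓕

/-- A family is compact if, identified with a set of characteristic functions in the
Cantor space `ℕ → Bool`, it is closed (equivalently, compact). -/
def CompactFamily (𝓕 : Set (Finset ℕ)) : Prop :=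
  IsClosed {f : ℕ → Bool | ∃ F ∈ 𝓕, f = fun n => decide (n ∈ F)}

/-- A regular family: hereditary, spreading, compact, and containing all singletons. -/
def RegularFamily (𝓕 : Set (Finset ℕ)) : Prop :=
  Hereditary 𝓕 ∧ Spreading 𝓕 ∧ CompactFamily 𝓕 ∧ ∀ n : ℕ, {n} ∈ 𝓕

/-- `F` is a maximal member of `𝓕` with respect to inclusion. -/
def MaximalIn (𝓕 : Set (Finset ℕ)) (F : Finset ℕ) : Prop :=
  F ∈ 𝓕 ∧ ∀ G ∈ 𝓕, F ⊆ G → F = G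
/-- The successor step of the Schreier hierarchy: admissible unions of sets of the
previous family. -/
def SchreierSucc (𝓐 : Set (Finset ℕ)) : Set (Finset ℕ) :=
  {F | F = ∅ ∨ ∃ (k : ℕ) (E : Fin k → Finset ℕ) (hne : ∀ j, (E j).Nonempty),
    (∀ j, E j ∈ 𝓐) ∧
    (∀ j j' : Fin k, j < j' → ∀ a ∈ E j, ∀ b ∈ E j', a < b) ∧
    (Finset.univ.image (fun j => (E j).min' (hne j)) ∈ Schreier) ∧
    F = Finset.univ.biUnion E}

/-- A system of Schreier families `S_α`, with a fixed choice, for each countable limit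
ordinal, of an increasing sequence of ordinals converging to it. -/
structure SchreierSystem where
  fam : Ordinal → Set (Finset ℕ)
  approx : Ordinal → ℕ → Ordinal
  one_eq : fam 1 = Schreier
  succ_eq : ∀ α : Ordinal, fam (α + 1) = SchreierSucc (fam α)
  approx_pos : ∀ α : Ordinal, ∀ n : ℕ, 1 ≤ approx α n
  approx_strictMono : ∀ α : Ordinal, Order.IsSuccLimit α → α.card ≤ Cardinal.aleph0 →
    StrictMono (approx α)
  approx_lt : ∀ α : Ordinal, Order.IsSuccLimit α → α.card ≤ Cardinal.aleph0 → ∀ n, approx α n < α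
  approx_sup : ∀ α : Ordinal, Order.IsSuccLimit α → α.card ≤ Cardinal.aleph0 →
    (⨆ n, approx α n) = α
  limit_eq : ∀ α : Ordinal, Order.IsSuccLimit α → α.card ≤ Cardinal.aleph0 →
    fam α = {F | F = ∅ ∨ ∃ h : F.Nonempty, ∃ n : ℕ,
      1 ≤ n ∧ n ≤ F.min' h ∧ F ∈ fam (approx α n)}

lemma injOn_of_strictMonoOn {E : Finset ℕ} {σ : ℕ → ℕ}
    (h : ∀ m ∈ E, ∀ n ∈ E, m < n → σ m < σ n) : Set.InjOn σ E := by
  intro a ha b hb hab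
  by_contra hne
  rcases lt_or_gt_of_ne hne with hl | hl
  · exact absurd hab (h a ha b hb hl).ne
  · exact absurd hab.symm (h b hb a ha hl).ne

lemma min'_image_mono (E : Finset ℕ) (hE : E.Nonempty) (σ : ℕ → ℕ)
    (h : ∀ m ∈ E, ∀ n ∈ E, m < n → σ m < σ n) :
    (E.image σ).min' (hE.image σ) = σ (E.min' hE) := by
  apply le_antisymm
  · exact Finset.min'_le _ _ (Finset.mem_image_of_mem σ (E.min'_mem hE))
  · obtain ⟨e, he, heq⟩ := Finset.mem_image.mp ((E.image σ).min'_mem (hE.image σ))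
    rw [← heq]
    rcases eq_or_lt_of_le (E.min'_le e he) with h' | h'
    · rw [h']
    · exact (h _ (E.min'_mem hE) _ he h').le

lemma schreier_hered : Hereditary Schreier := by
  rintro F (rfl | ⟨hF, hpos, hcard⟩) E hEF
  · left; exact Finset.subset_empty.mp hEF
  · rcases E.eq_empty_or_nonempty with rfl | hEne
    · left; rfl
    · right
      refine ⟨hEne, fun n hn => hpos n (hEF hn), ?_⟩
      calc E.card ≤ F.card := Finset.card_le_card hEF
        _ ≤ F.min' hF := hcard
        _ ≤ E.min' hEne := Finset.le_min' _ _ _ fun y hy => Finset.min'_le _ _ (hEF hy)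

lemma schreier_spread : Spreading Schreier := by
  rintro F (rfl | ⟨hF, hpos, hcard⟩) σ hge hmono
  · left; simp
  · right
    refine ⟨hF.image σ, ?_, ?_⟩
    · rintro n hn
      obtain ⟨m, hm, rfl⟩ := Finset.mem_image.mp hn
      exact lt_of_lt_of_le (hpos m hm) (hge m hm)
    · rw [Finset.card_image_of_injOn (injOn_of_strictMonoOn hmono),
        min'_image_mono F hF σ hmono]
      exact le_trans hcard (hge _ (F.min'_mem hF))

lemma schreier_singleton (n : ℕ) (h : 1 ≤ n) : ({n} : Finset ℕ) ∈ Schreier := by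
  right
  refine ⟨⟨n, by simp⟩, ?_, ?_⟩ <;> simp [h, Nat.lt_of_lt_of_le Nat.zero_lt_one h]

lemma schreier_pos : ∀ F ∈ Schreier, ∀ x ∈ F, 0 < x := by
  rintro F (rfl | ⟨hF, hpos, hcard⟩) x hx
  · simp at hx
  · exact hpos x hx

lemma spread_insert_erase (𝓕 : Set (Finset ℕ)) (hs : Spreading 𝓕) (T : Finset ℕ)
    (hT : T ∈ 𝓕) (x : ℕ) (hx : x ∈ T) :
    ∃ N, (∀ a ∈ T, a < N) ∧ insert N (T.erase x) ∈ 𝓕 := by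
  have hTne : T.Nonempty := ⟨x, hx⟩
  set M := T.max' hTne + 1 with hM
  have hMgt : ∀ a ∈ T, a < M := fun a ha => Nat.lt_succ_of_le (T.le_max' a ha)
  set S := insert M T with hS
  set nxt : ℕ → ℕ := fun n => WithTop.untopD 0 ((S.filter (fun t => n < t)).min) with hnxt
  have key : ∀ n ∈ T, nxt n ∈ S ∧ n < nxt n ∧ ∀ m ∈ S, n < m → nxt n ≤ m := by
    intro n hn
    have hfne : (S.filter (fun t => n < t)).Nonempty :=
      ⟨M, Finset.mem_filter.mpr ⟨Finset.mem_insert_self _ _, hMgt n hn⟩⟩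
    have hmin : nxt n = (S.filter (fun t => n < t)).min' hfne := by
      simp only [hnxt]
      rw [← Finset.coe_min' hfne, WithTop.untopD_coe]
    have h1 := Finset.min'_mem _ hfne
    rw [← hmin, Finset.mem_filter] at h1
    refine ⟨h1.1, h1.2, fun m hm hnm => ?_⟩
    rw [hmin]
    exact Finset.min'_le _ _ (Finset.mem_filter.mpr ⟨hm, hnm⟩)
  set σ : ℕ → ℕ := fun n => if x ≤ n ∧ n ∈ T then nxt n else n with hσ
  have hσT : ∀ n ∈ T, x ≤ n → σ n = nxt n := by
    intro n hn hxn; simp [hσ, hxn, hn]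
  have hσlt : ∀ n, ¬ x ≤ n → σ n = n := by
    intro n hxn; simp only [hσ]; rw [if_neg]; tauto
  have hge : ∀ n ∈ T, n ≤ σ n := by
    intro n hn
    by_cases hxn : x ≤ n
    · rw [hσT n hn hxn]; exact (key n hn).2.1.le
    · rw [hσlt n hxn]
  have hmono : ∀ m ∈ T, ∀ n ∈ T, m < n → σ m < σ n := by
    intro m hm n hn hmn
    by_cases hxm : x ≤ m
    · have hxn : x ≤ n := le_trans hxm hmn.le
      rw [hσT m hm hxm, hσT n hn hxn]
      calc nxt m ≤ n := (key m hm).2.2 n (Finset.mem_insert_of_mem hn) hmn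
        _ < nxt n := (key n hn).2.1
    · rw [hσlt m hxm]
      by_cases hxn : x ≤ n
      · rw [hσT n hn hxn]; exact lt_trans hmn (key n hn).2.1
      · rw [hσlt n hxn]; exact hmn
  have himg : T.image σ = insert M (T.erase x) := by
    apply Finset.Subset.antisymm
    · intro b hb
      obtain ⟨a, ha, rfl⟩ := Finset.mem_image.mp hb
      by_cases hxa : x ≤ a
      · rw [hσT a ha hxa]
        have h1 := (key a ha).1
        have h2 : x < nxt a := lt_of_le_of_lt hxa (key a ha).2.1
        rw [hS, Finset.mem_insert] at h1
        rcases h1 with h1 | h1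
        · rw [h1]; exact Finset.mem_insert_self _ _
        · exact Finset.mem_insert_of_mem (Finset.mem_erase.mpr ⟨h2.ne', h1⟩)
      · rw [hσlt a hxa]
        push_neg at hxa
        exact Finset.mem_insert_of_mem (Finset.mem_erase.mpr ⟨hxa.ne, ha⟩)
    · intro b hb
      rw [Finset.mem_insert] at hb
      rcases hb with rfl | hb
      · -- b = M
        have hmax : T.max' hTne ∈ T := T.max'_mem hTne
        have hxmax : x ≤ T.max' hTne := T.le_max' x hx
        refine Finset.mem_image.mpr ⟨T.max' hTne, hmax, ?_⟩
        rw [hσT _ hmax hxmax]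
        have h1 := (key _ hmax).1
        rw [hS, Finset.mem_insert] at h1
        rcases h1 with h1 | h1
        · exact h1
        · exact absurd (T.le_max' _ h1) (not_le.mpr (key _ hmax).2.1)
      · rw [Finset.mem_erase] at hb
        obtain ⟨hbx, hbT⟩ := hb
        rcases lt_or_gt_of_ne hbx with hlt | hgt
        · exact Finset.mem_image.mpr ⟨b, hbT, hσlt b (not_le.mpr hlt)⟩
        · set A := T.filter (fun u => x ≤ u ∧ u < b) with hA
          have hAne : A.Nonempty := ⟨x, Finset.mem_filter.mpr ⟨hx, le_refl x, hgt⟩⟩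
          set s := A.max' hAne with hs'
          have hsA : s ∈ A := A.max'_mem hAne
          rw [hA, Finset.mem_filter] at hsA
          obtain ⟨hsT, hxs, hsb⟩ := hsA
          refine Finset.mem_image.mpr ⟨s, hsT, ?_⟩
          rw [hσT s hsT hxs]
          have hle : nxt s ≤ b := (key s hsT).2.2 b (Finset.mem_insert_of_mem hbT) hsb
          rcases eq_or_lt_of_le hle with heq | hlt2
          · exact heq
          · exfalso
            have h1 := (key s hsT).1
            rw [hS, Finset.mem_insert] at h1
            rcases h1 with h1 | h1
            · have : b < M := hMgt b hbT
              omega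
            · have : nxt s ∈ A := Finset.mem_filter.mpr
                ⟨h1, le_trans hxs (key s hsT).2.1.le, hlt2⟩
              exact absurd (A.le_max' _ this) (not_le.mpr (key s hsT).2.1)
  refine ⟨M, hMgt, ?_⟩
  rw [← himg]
  exact hs T hT σ hge hmono

def Good (𝓕 : Set (Finset ℕ)) : Prop :=
  Hereditary 𝓕 ∧ Spreading 𝓕 ∧ (∀ n : ℕ, 1 ≤ n → ({n} : Finset ℕ) ∈ 𝓕) ∧
    (∀ F ∈ 𝓕, ∀ x ∈ F, 0 < x)

lemma good_schreier : Good Schreier :=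
  ⟨schreier_hered, schreier_spread, schreier_singleton, schreier_pos⟩

lemma mins_injective {k : ℕ} (E : Fin k → Finset ℕ) (hne : ∀ j, (E j).Nonempty)
    (hord : ∀ j j' : Fin k, j < j' → ∀ a ∈ E j, ∀ b ∈ E j', a < b) :
    Function.Injective (fun j => (E j).min' (hne j)) := by
  intro j j' hjj
  by_contra hne'
  rcases lt_or_gt_of_ne hne' with h | h
  · exact absurd hjj (hord j j' h _ ((E j).min'_mem _) _ ((E j').min'_mem _)).ne
  · exact absurd hjj.symm (hord j' j h _ ((E j').min'_mem _) _ ((E j).min'_mem _)).ne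

lemma mins_card {k : ℕ} (E : Fin k → Finset ℕ) (hne : ∀ j, (E j).Nonempty)
    (hord : ∀ j j' : Fin k, j < j' → ∀ a ∈ E j, ∀ b ∈ E j', a < b) :
    (Finset.univ.image (fun j => (E j).min' (hne j))).card = k := by
  rw [Finset.card_image_of_injective _ (mins_injective E hne hord), Finset.card_univ,
    Fintype.card_fin]

lemma good_succ (𝓐 : Set (Finset ℕ)) (hg : Good 𝓐) : Good (SchreierSucc 𝓐) := by
  obtain ⟨hh, hs, hsing, hpos⟩ := hg
  have posSucc : ∀ F ∈ SchreierSucc 𝓐, ∀ x ∈ F, 0 < x := by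
    rintro F (rfl | ⟨k, E, hne, hmem, hord, hmins, rfl⟩) x hx
    · simp at hx
    · obtain ⟨j, _, hj⟩ := Finset.mem_biUnion.mp hx
      exact hpos _ (hmem j) x hj
  refine ⟨?_, ?_, ?_, posSucc⟩
  · -- Hereditary
    rintro F (rfl | ⟨k, E, hne, hmem, hord, hmins, rfl⟩) G hG
    · left; exact Finset.subset_empty.mp hG
    · rcases G.eq_empty_or_nonempty with rfl | hGne
      · left; rfl
      right
      classical
      set J : Finset (Fin k) := Finset.univ.filter (fun j => (E j ∩ G).Nonempty) with hJ
      set m := J.card with hm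
      set emb := J.orderIsoOfFin rfl with hemb
      refine ⟨m, fun i => E (emb i) ∩ G, fun i => ?_, fun i => ?_, ?_, ?_, ?_⟩
      · exact (Finset.mem_filter.mp (emb i).2).2
      · exact hh _ (hmem _) _ Finset.inter_subset_left
      · intro i i' hii a ha b hb
        have h1 : ((emb i : {x // x ∈ J}) : Fin k) < ((emb i' : {x // x ∈ J}) : Fin k) := by
          exact_mod_cast emb.strictMono hii
        exact hord _ _ h1 a (Finset.mem_inter.mp ha).1 b (Finset.mem_inter.mp hb).1
      · -- mins in Schreier
        have hJne : J.Nonempty := by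
          obtain ⟨g, hg'⟩ := hGne
          have hgF : g ∈ Finset.univ.biUnion E := hG hg'
          obtain ⟨j, _, hj⟩ := Finset.mem_biUnion.mp hgF
          exact ⟨j, by rw [hJ, Finset.mem_filter]; exact ⟨Finset.mem_univ _, ⟨g, Finset.mem_inter.mpr ⟨hj, hg'⟩⟩⟩⟩
        have hmne : 0 < m := Finset.card_pos.mpr hJne
        have hune : (Finset.univ : Finset (Fin m)).Nonempty := by
          exact ⟨⟨0, hmne⟩, Finset.mem_univ _⟩
        right
        have holdne : (Finset.univ : Finset (Fin k)).Nonempty :=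
          ⟨hJne.choose, Finset.mem_univ _⟩
        refine ⟨hune.image _, ?_, ?_⟩
        · intro n hn
          obtain ⟨i, _, rfl⟩ := Finset.mem_image.mp hn
          exact posSucc _ (Or.inr ⟨k, E, hne, hmem, hord, hmins, rfl⟩) _
            (Finset.mem_biUnion.mpr ⟨emb i, Finset.mem_univ _,
              (Finset.mem_inter.mp (Finset.min'_mem _ _)).1⟩)
        · obtain ⟨hominsne, _, holdcard⟩ := hmins.resolve_left (by
            intro h
            exact absurd (Finset.mem_image_of_mem _ (Finset.mem_univ (holdne.choose)))
              (by rw [h]; simp))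
          calc ((Finset.univ : Finset (Fin m)).image _).card
              ≤ m := le_trans (Finset.card_image_le) (by simp)
            _ ≤ k := by rw [hm]; exact le_trans (Finset.card_filter_le _ _) (by simp)
            _ = (Finset.univ.image (fun j => (E j).min' (hne j))).card :=
                (mins_card E hne hord).symm
            _ ≤ (Finset.univ.image (fun j => (E j).min' (hne j))).min' hominsne := holdcard
            _ ≤ _ := by
                apply Finset.le_min'
                intro y hy
                obtain ⟨i, _, rfl⟩ := Finset.mem_image.mp hy
                calc (Finset.univ.image (fun j => (E j).min' (hne j))).min' hominsne
                    ≤ (E (emb i)).min' (hne _) :=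
                      Finset.min'_le _ _ (Finset.mem_image_of_mem _ (Finset.mem_univ _))
                  _ ≤ _ := Finset.min'_le _ _
                      (Finset.mem_of_mem_inter_left (Finset.min'_mem _ _))
      · -- G = biUnion
        apply Finset.Subset.antisymm
        · intro g hg'
          have hgF : g ∈ Finset.univ.biUnion E := hG hg'
          obtain ⟨j, _, hj⟩ := Finset.mem_biUnion.mp hgF
          have hjJ : j ∈ J := by
            rw [hJ, Finset.mem_filter]
            exact ⟨Finset.mem_univ _, ⟨g, Finset.mem_inter.mpr ⟨hj, hg'⟩⟩⟩
          refine Finset.mem_biUnion.mpr ⟨emb.symm ⟨j, hjJ⟩, Finset.mem_univ _, ?_⟩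
          rw [Finset.mem_inter]
          constructor
          · rw [emb.apply_symm_apply]
            exact hj
          · exact hg'
        · intro g hg'
          obtain ⟨i, _, hi⟩ := Finset.mem_biUnion.mp hg'
          exact (Finset.mem_inter.mp hi).2
  · -- Spreading
    rintro F (rfl | ⟨k, E, hne, hmem, hord, hmins, rfl⟩) σ hge hmono
    · left; simp
    · right
      have hEF : ∀ j, E j ⊆ Finset.univ.biUnion E :=
        fun j x hx => Finset.mem_biUnion.mpr ⟨j, Finset.mem_univ _, hx⟩
      refine ⟨k, fun j => (E j).image σ, fun j => (hne j).image σ, ?_, ?_, ?_, ?_⟩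
      · intro j
        exact hs _ (hmem j) σ (fun n hn => hge n (hEF j hn))
          (fun a ha b hb hab => hmono a (hEF j ha) b (hEF j hb) hab)
      · intro j j' hjj a ha b hb
        obtain ⟨a', ha', rfl⟩ := Finset.mem_image.mp ha
        obtain ⟨b', hb', rfl⟩ := Finset.mem_image.mp hb
        exact hmono a' (hEF j ha') b' (hEF j' hb') (hord j j' hjj a' ha' b' hb')
      · have heq : (Finset.univ.image fun j => ((E j).image σ).min' ((hne j).image σ))
            = (Finset.univ.image (fun j => (E j).min' (hne j))).image σ := by
          rw [Finset.image_image]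
          apply Finset.image_congr
          intro j _
          exact min'_image_mono (E j) (hne j) σ
            (fun a ha b hb hab => hmono a (hEF j ha) b (hEF j hb) hab)
        rw [heq]
        apply schreier_spread _ hmins σ
        · intro n hn
          obtain ⟨j, _, rfl⟩ := Finset.mem_image.mp hn
          exact hge _ (hEF j (Finset.min'_mem _ _))
        · intro a ha b hb hab
          obtain ⟨j, _, rfl⟩ := Finset.mem_image.mp ha
          obtain ⟨j', _, rfl⟩ := Finset.mem_image.mp hb
          exact hmono _ (hEF j (Finset.min'_mem _ _)) _ (hEF j' (Finset.min'_mem _ _)) hab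
      · rw [Finset.biUnion_image]
  · -- singletons
    intro n hn
    right
    refine ⟨1, fun _ => {n}, fun _ => ⟨n, by simp⟩, fun _ => hsing n hn, ?_, ?_, ?_⟩
    · intro j j' hjj
      exact absurd hjj (by omega)
    · have : (Finset.univ.image fun _ : Fin 1 => ({n} : Finset ℕ).min' ⟨n, by simp⟩) = {n} := by
        simp
      rw [this]
      exact schreier_singleton n hn
    · simp

lemma exists_insert_of_ssubset (𝓕 : Set (Finset ℕ)) (hh : Hereditary 𝓕)
    (hs : Spreading 𝓕) {F G : Finset ℕ} (hG : G ∈ 𝓕) (hFG : F ⊆ G) (hne : F ≠ G) :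
    ∃ N, (∀ a ∈ F, a < N) ∧ insert N F ∈ 𝓕 := by
  obtain ⟨x, hxG, hxF⟩ := Finset.exists_of_ssubset (lt_of_le_of_ne hFG hne)
  have hT : insert x F ∈ 𝓕 := hh G hG _ (Finset.insert_subset hxG hFG)
  obtain ⟨N, hN, h2⟩ := spread_insert_erase 𝓕 hs (insert x F) hT x
    (Finset.mem_insert_self _ _)
  rw [Finset.erase_insert hxF] at h2
  exact ⟨N, fun a ha => hN a (Finset.mem_insert_of_mem ha), h2⟩

lemma good_fam (sys : SchreierSystem) :
    ∀ α : Ordinal, 1 ≤ α → α.card ≤ Cardinal.aleph0 → Good (sys.fam α) := by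
  intro α
  induction α using Ordinal.induction with
  | h α IH =>
  intro h1 hc
  rcases Ordinal.zero_or_succ_or_isSuccLimit α with rfl | ⟨β, rfl⟩ | hlim
  · exact absurd h1 (by simp)
  · rcases eq_zero_or_pos β with rfl | hβ
    · have : Order.succ (0 : Ordinal) = 1 := by simp
      rw [this, sys.one_eq]
      exact good_schreier
    · have hβ1 : (1 : Ordinal) ≤ β := Order.one_le_iff_pos.mpr hβ
      have hlt : β < Order.succ β := Order.lt_succ β
      have hβc : β.card ≤ Cardinal.aleph0 := le_trans (Ordinal.card_le_card hlt.le) hc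
      rw [← Ordinal.add_one_eq_succ, sys.succ_eq]
      exact good_succ _ (IH β hlt hβ1 hβc)
  · have happ : ∀ n : ℕ, Good (sys.fam (sys.approx α n)) := by
      intro n
      have hlt := sys.approx_lt α hlim hc n
      exact IH _ hlt (sys.approx_pos α n)
        (le_trans (Ordinal.card_le_card hlt.le) hc)
    rw [sys.limit_eq α hlim hc]
    refine ⟨?_, ?_, ?_, ?_⟩
    · -- Hereditary
      rintro F (rfl | ⟨hFne, n, hn1, hnmin, hFmem⟩) G hG
      · left; exact Finset.subset_empty.mp hG
      rcases G.eq_empty_or_nonempty with rfl | hGne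
      · left; rfl
      right
      refine ⟨hGne, n, hn1, ?_, (happ n).1 _ hFmem _ hG⟩
      calc (n : ℕ) ≤ F.min' hFne := hnmin
        _ ≤ G.min' hGne := Finset.le_min' _ _ _ fun y hy => Finset.min'_le _ _ (hG hy)
    · -- Spreading
      rintro F (rfl | ⟨hFne, n, hn1, hnmin, hFmem⟩) σ hge hmono
      · left; simp
      right
      refine ⟨hFne.image σ, n, hn1, ?_, (happ n).2.1 _ hFmem σ hge hmono⟩
      apply Finset.le_min'
      intro y hy
      obtain ⟨e, he, rfl⟩ := Finset.mem_image.mp hy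
      exact le_trans hnmin (le_trans (Finset.min'_le _ _ he) (hge e he))
    · -- singletons
      intro n hn
      right
      exact ⟨⟨n, by simp⟩, 1, le_refl 1, by simp [hn], (happ 1).2.2.1 n hn⟩
    · -- positivity
      rintro F (rfl | ⟨hFne, n, hn1, hnmin, hFmem⟩) x hx
      · simp at hx
      · exact (happ n).2.2.2 _ hFmem x hx

lemma succ_max_min (𝓐 : Set (Finset ℕ)) (hg : Good 𝓐) (E : Finset ℕ)
    (hmax : MaximalIn (SchreierSucc 𝓐) E) (hEne : E.Nonempty)
    (k : ℕ) (Eb : Fin k → Finset ℕ) (hne : ∀ j, (Eb j).Nonempty)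
    (hmem : ∀ j, Eb j ∈ 𝓐)
    (hord : ∀ j j' : Fin k, j < j' → ∀ a ∈ Eb j, ∀ b ∈ Eb j', a < b)
    (hmins : Finset.univ.image (fun j => (Eb j).min' (hne j)) ∈ Schreier)
    (hEq : E = Finset.univ.biUnion Eb) : E.min' hEne = k := by
  classical
  have hEF : ∀ j, Eb j ⊆ E := by
    intro j x hx
    rw [hEq]
    exact Finset.mem_biUnion.mpr ⟨j, Finset.mem_univ _, hx⟩
  have hkpos : 0 < k := by
    rcases Nat.eq_zero_or_pos k with rfl | h
    · exfalso
      obtain ⟨x, hx⟩ := hEne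
      rw [hEq] at hx
      obtain ⟨j, _, _⟩ := Finset.mem_biUnion.mp hx
      exact Fin.elim0 j
    · exact h
  have hminsne : (Finset.univ.image (fun j => (Eb j).min' (hne j))).Nonempty :=
    ⟨(Eb ⟨0, hkpos⟩).min' (hne _), Finset.mem_image_of_mem _ (Finset.mem_univ _)⟩
  -- every element of the mins image is ≥ min' E, and min of mins image ≤ min' E
  have hminsE : ∀ y ∈ Finset.univ.image (fun j => (Eb j).min' (hne j)), E.min' hEne ≤ y := by
    intro y hy
    obtain ⟨j, _, rfl⟩ := Finset.mem_image.mp hy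
    exact Finset.min'_le _ _ (hEF j (Finset.min'_mem _ _))
  have hle : k ≤ E.min' hEne := by
    obtain ⟨_, _, hcard⟩ := hmins.resolve_left (by
      intro h
      rw [h] at hminsne
      exact absurd hminsne (by simp))
    have h1 : (Finset.univ.image (fun j => (Eb j).min' (hne j))).min' hminsne
        ≤ E.min' hEne := by
      have hmm : E.min' hEne ∈ Finset.univ.biUnion Eb := by
        rw [← hEq]; exact E.min'_mem hEne
      obtain ⟨j, _, hj⟩ := Finset.mem_biUnion.mp hmm
      have h1' : (Eb j).min' (hne j) ∈
          Finset.univ.image (fun j => (Eb j).min' (hne j)) :=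
        Finset.mem_image_of_mem (fun j => (Eb j).min' (hne j)) (Finset.mem_univ j)
      exact le_trans (Finset.min'_le _ _ h1') (Finset.min'_le _ _ hj)
    calc k = _ := (mins_card Eb hne hord).symm
      _ ≤ _ := hcard
      _ ≤ E.min' hEne := h1
  refine le_antisymm ?_ hle
  by_contra hlt
  push_neg at hlt
  -- so k < min' E; extend by a new singleton block {N}
  set N := E.max' hEne + 1 with hN
  have hNgt : ∀ a ∈ E, a < N := fun a ha => Nat.lt_succ_of_le (E.le_max' a ha)
  have hN1 : 1 ≤ N := Nat.succ_le_succ (Nat.zero_le _)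
  set Eb' : Fin (k + 1) → Finset ℕ :=
    fun i => if h : (i : ℕ) < k then Eb ⟨i, h⟩ else {N} with hEb'
  have hne' : ∀ i, (Eb' i).Nonempty := by
    intro i
    rw [hEb']
    dsimp only
    split
    · exact hne _
    · exact ⟨N, by simp⟩
  have hbig : insert N E = Finset.univ.biUnion Eb' := by
    ext a
    simp only [Finset.mem_insert, Finset.mem_biUnion]
    constructor
    · rintro (rfl | ha)
      · refine ⟨⟨k, by omega⟩, Finset.mem_univ _, ?_⟩
        rw [hEb']
        simp
      · rw [hEq] at ha
        obtain ⟨j, _, hj⟩ := Finset.mem_biUnion.mp ha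
        refine ⟨⟨j, by omega⟩, Finset.mem_univ _, ?_⟩
        rw [hEb']
        dsimp only
        rw [dif_pos j.2]
        simpa using hj
    · rintro ⟨i, _, hi⟩
      rw [hEb'] at hi
      dsimp only at hi
      by_cases h : (i : ℕ) < k
      · rw [dif_pos h] at hi
        exact Or.inr (hEF _ hi)
      · rw [dif_neg h] at hi
        simp at hi
        exact Or.inl hi
  have hmem' : insert N E ∈ SchreierSucc 𝓐 := by
    right
    refine ⟨k + 1, Eb', hne', ?_, ?_, ?_, hbig⟩
    · intro i
      rw [hEb']
      dsimp only
      split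
      · exact hmem _
      · exact hg.2.2.1 N hN1
    · intro i i' hii a ha b hb
      rw [hEb'] at ha hb
      dsimp only at ha hb
      by_cases h' : (i' : ℕ) < k
      · have h : (i : ℕ) < k := by
          have := Fin.lt_iff_val_lt_val.mp hii
          omega
        rw [dif_pos h] at ha
        rw [dif_pos h'] at hb
        exact hord _ _ (by simpa using Fin.lt_iff_val_lt_val.mp hii) a ha b hb
      · have h : (i : ℕ) < k := by
          have h1 := Fin.lt_iff_val_lt_val.mp hii
          have := i'.2
          omega
        rw [dif_pos h] at ha
        rw [dif_neg h'] at hb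
        simp at hb
        subst hb
        exact hNgt a (hEF _ ha)
    · -- the new mins set is in Schreier
      right
      have hpos : ∀ n_1 ∈ Finset.univ.image (fun i => (Eb' i).min' (hne' i)), 0 < n_1 := by
        intro y hy
        obtain ⟨i, _, hyi⟩ := Finset.mem_image.mp hy
        have hymem : y ∈ Eb' i := by rw [← hyi]; exact Finset.min'_mem _ _
        by_cases h : (i : ℕ) < k
        · have heb : Eb' i = Eb ⟨i, h⟩ := by rw [hEb']; exact dif_pos h
          rw [heb] at hymem
          exact hg.2.2.2 _ (hmem _) _ hymem
        · have heb : Eb' i = {N} := by rw [hEb']; exact dif_neg h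
          rw [heb] at hymem
          simp at hymem
          omega
      have hgemin : ∀ y ∈ Finset.univ.image (fun i => (Eb' i).min' (hne' i)),
          E.min' hEne ≤ y := by
        intro y hy
        obtain ⟨i, _, hyi⟩ := Finset.mem_image.mp hy
        have hymem : y ∈ Eb' i := by rw [← hyi]; exact Finset.min'_mem _ _
        by_cases h : (i : ℕ) < k
        · have heb : Eb' i = Eb ⟨i, h⟩ := by rw [hEb']; exact dif_pos h
          rw [heb] at hymem
          exact Finset.min'_le _ _ (hEF _ hymem)
        · have heb : Eb' i = {N} := by rw [hEb']; exact dif_neg h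
          rw [heb] at hymem
          simp at hymem
          rw [hymem]
          exact le_trans (Finset.min'_le _ _ (E.max'_mem hEne)) (Nat.le_succ _)
      refine ⟨⟨(Eb' ⟨0, by omega⟩).min' (hne' _),
        Finset.mem_image_of_mem _ (Finset.mem_univ _)⟩, hpos, ?_⟩
      calc (Finset.univ.image (fun i => (Eb' i).min' (hne' i))).card
          ≤ k + 1 := le_trans Finset.card_image_le (by simp)
        _ ≤ E.min' hEne := hlt
        _ ≤ _ := Finset.le_min' _ _ _ hgemin
  have := hmax.2 _ hmem' (Finset.subset_insert _ _)
  have hNE : N ∈ E := by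
    rw [this]
    exact Finset.mem_insert_self _ _
  exact absurd (hNgt N hNE) (by omega)

lemma schreier_max_card (E : Finset ℕ) (hmax : MaximalIn Schreier E)
    (hEne : E.Nonempty) : E.card = E.min' hEne := by
  obtain ⟨hmem, hup⟩ := hmax
  obtain ⟨_, hpos, hcard⟩ := hmem.resolve_left (Finset.nonempty_iff_ne_empty.mp hEne)
  refine le_antisymm hcard ?_
  by_contra hlt
  push_neg at hlt
  set N := E.max' hEne + 1 with hN
  have hNgt : ∀ a ∈ E, a < N := fun a ha => Nat.lt_succ_of_le (E.le_max' a ha)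
  have hNE : N ∉ E := fun h => absurd (hNgt N h) (by omega)
  have hmin : (insert N E).min' ((Finset.insert_nonempty _ _)) = E.min' hEne := by
    rw [Finset.min'_insert]
    exact min_eq_right (le_trans (Finset.min'_le _ _ (E.max'_mem hEne)) (Nat.le_succ _) :
      E.min' hEne ≤ N)
  have hins : insert N E ∈ Schreier := by
    right
    refine ⟨Finset.insert_nonempty _ _, ?_, ?_⟩
    · intro n hn
      rcases Finset.mem_insert.mp hn with rfl | hn
      · omega
      · exact hpos n hn
    · rw [Finset.card_insert_of_notMem hNE, hmin]
      omega
  have heq := hup _ hins (Finset.subset_insert _ _)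
  exact hNE (heq ▸ Finset.mem_insert_self N E)

lemma main_aux (sys : SchreierSystem) :
    ∀ α : Ordinal, 1 ≤ α → α.card ≤ Cardinal.aleph0 →
    ∀ E F : Finset ℕ, MaximalIn (sys.fam α) E → MaximalIn (sys.fam α) F →
    ∀ hEne : E.Nonempty, ∀ hFne : F.Nonempty, ∀ σ : ℕ → ℕ,
    (∀ m ∈ E, ∀ n ∈ E, m < n → σ m < σ n) → (∀ n ∈ E, n ≤ σ n) →
    E.image σ = F → E.min' hEne = F.min' hFne := by
  intro α
  induction α using Ordinal.induction with
  | h α IH =>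
  intro h1 hc E F hE hF hEne hFne σ hmono hge himg
  rcases Ordinal.zero_or_succ_or_isSuccLimit α with rfl | ⟨β, rfl⟩ | hlim
  · exact absurd h1 (by simp)
  · rcases eq_zero_or_pos β with rfl | hβ
    · have e1 : Order.succ (0 : Ordinal) = 1 := by simp
      rw [e1, sys.one_eq] at hE hF
      rw [← schreier_max_card E hE hEne, ← schreier_max_card F hF hFne, ← himg,
        Finset.card_image_of_injOn (injOn_of_strictMonoOn hmono)]
    · have hβ1 : (1 : Ordinal) ≤ β := Order.one_le_iff_pos.mpr hβ
      have hβc : β.card ≤ Cardinal.aleph0 :=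
        le_trans (Ordinal.card_le_card (Order.lt_succ β).le) hc
      have hgood : Good (sys.fam β) := good_fam sys β hβ1 hβc
      rw [← Ordinal.add_one_eq_succ, sys.succ_eq] at hE hF
      obtain ⟨k, Eb, hne, hmem, hord, hmins, hEq⟩ :=
        hE.1.resolve_left (Finset.nonempty_iff_ne_empty.mp hEne)
      have hEF : ∀ j, Eb j ⊆ E := by
        intro j x hx
        rw [hEq]
        exact Finset.mem_biUnion.mpr ⟨j, Finset.mem_univ _, hx⟩
      have hk : E.min' hEne = k := succ_max_min _ hgood E hE hEne k Eb hne hmem hord hmins hEq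
      -- transport the decomposition along σ
      have hkF : F.min' hFne = k := by
        refine succ_max_min _ hgood F hF hFne k (fun j => (Eb j).image σ)
          (fun j => (hne j).image σ) ?_ ?_ ?_ ?_
        · intro j
          exact hgood.2.1 _ (hmem j) σ (fun n hn => hge n (hEF j hn))
            (fun a ha b hb hab => hmono a (hEF j ha) b (hEF j hb) hab)
        · intro j j' hjj a ha b hb
          obtain ⟨a', ha', rfl⟩ := Finset.mem_image.mp ha
          obtain ⟨b', hb', rfl⟩ := Finset.mem_image.mp hb
          exact hmono a' (hEF j ha') b' (hEF j' hb') (hord j j' hjj a' ha' b' hb')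
        · have heq : (Finset.univ.image fun j => ((Eb j).image σ).min' ((hne j).image σ))
              = (Finset.univ.image (fun j => (Eb j).min' (hne j))).image σ := by
            rw [Finset.image_image]
            apply Finset.image_congr
            intro j _
            exact min'_image_mono (Eb j) (hne j) σ
              (fun a ha b hb hab => hmono a (hEF j ha) b (hEF j hb) hab)
          rw [heq]
          apply schreier_spread _ hmins σ
          · intro n hn
            obtain ⟨j, _, rfl⟩ := Finset.mem_image.mp hn
            exact hge _ (hEF j (Finset.min'_mem _ _))
          · intro a ha b hb hab
            obtain ⟨j, _, rfl⟩ := Finset.mem_image.mp ha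
            obtain ⟨j', _, rfl⟩ := Finset.mem_image.mp hb
            exact hmono _ (hEF j (Finset.min'_mem _ _)) _ (hEF j' (Finset.min'_mem _ _)) hab
        · rw [← himg, hEq, Finset.biUnion_image]
      rw [hk, hkF]
  · -- limit case
    obtain ⟨hEmem, hEmax⟩ := hE
    obtain ⟨hFmem, hFmax⟩ := hF
    rw [sys.limit_eq α hlim hc] at hEmem
    obtain ⟨_, nE, hnE1, hnEmin, hEγ⟩ :=
      hEmem.resolve_left (Finset.nonempty_iff_ne_empty.mp hEne)
    set γ := sys.approx α nE with hγ
    have hγlt : γ < α := sys.approx_lt α hlim hc nE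
    have hγ1 : (1 : Ordinal) ≤ γ := sys.approx_pos α nE
    have hγc : γ.card ≤ Cardinal.aleph0 := le_trans (Ordinal.card_le_card hγlt.le) hc
    have hgood : Good (sys.fam γ) := good_fam sys γ hγ1 hγc
    have hFγ : F ∈ sys.fam γ := by
      rw [← himg]
      exact hgood.2.1 E hEγ σ hge hmono
    have hFminge : (nE : ℕ) ≤ F.min' hFne := by
      apply Finset.le_min'
      intro y hy
      rw [← himg] at hy
      obtain ⟨e, he, rfl⟩ := Finset.mem_image.mp hy
      exact le_trans hnEmin (le_trans (Finset.min'_le _ _ he) (hge e he))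
    have transfer : ∀ (X : Finset ℕ) (hXne : X.Nonempty), X ∈ sys.fam γ →
        ((nE : ℕ) ≤ X.min' hXne) →
        (∀ G ∈ sys.fam α, X ⊆ G → X = G) → MaximalIn (sys.fam γ) X := by
      intro X hXne hXγ hXmin hXmax
      refine ⟨hXγ, fun G hG hXG => ?_⟩
      by_contra hneq
      obtain ⟨N, hNgt, hins⟩ :=
        exists_insert_of_ssubset _ hgood.1 hgood.2.1 hG hXG hneq
      have hinsα : insert N X ∈ sys.fam α := by
        rw [sys.limit_eq α hlim hc]
        right
        refine ⟨Finset.insert_nonempty _ _, nE, hnE1, ?_, hins⟩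
        apply Finset.le_min'
        intro y hy
        rcases Finset.mem_insert.mp hy with rfl | hy
        · exact (lt_of_le_of_lt hXmin (hNgt _ (X.min'_mem hXne))).le
        · exact le_trans hXmin (Finset.min'_le _ _ hy)
      have heq := hXmax _ hinsα (Finset.subset_insert _ _)
      have hNX : N ∈ X := heq ▸ Finset.mem_insert_self N X
      exact absurd (hNgt N hNX) (by omega)
    have hEmaxγ : MaximalIn (sys.fam γ) E := transfer E hEne hEγ hnEmin hEmax
    have hFmaxγ : MaximalIn (sys.fam γ) F := transfer F hFne hFγ hFminge hFmax
    exact IH γ hγlt hγ1 hγc E F hEmaxγ hFmaxγ hEne hFne σ hmono hge himg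

/-- If `E` and `F` are maximal in the Schreier family `S_α` and `F` is a spreading of
`E`, then `min E = min F`. -/
theorem schreierFamily_spreading_maximal_min (sys : SchreierSystem) (α : Ordinal)
    (h1 : 1 ≤ α) (hc : α.card ≤ Cardinal.aleph0) (E F : Finset ℕ)
    (hE : MaximalIn (sys.fam α) E) (hF : MaximalIn (sys.fam α) F)
    (hEne : E.Nonempty) (hFne : F.Nonempty) (σ : ℕ → ℕ)
    (hmono : ∀ m ∈ E, ∀ n ∈ E, m < n → σ m < σ n)
    (hge : ∀ n ∈ E, n ≤ σ n) (himg : E.image σ = F) :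
    E.min' hEne = F.min' hFne := main_aux sys α h1 hc E F hE hF hEne hFne σ hmono hge himg
end

section
/- Let F be a regular family of finite subsets of ℕ containing all singletons. Then the extreme points of the dual unit ball of the combinatorial space X_F are exactly the functionals ∑_{i∈F} θᵢ eᵢ* where F is a maximal member of F and each θᵢ is a scalar of modulus 1. -/
/-- The combinatorial norm `‖x‖ = sup { ∑_{i ∈ F} |x i| : F ∈ 𝓕 }` on `c₀₀`. -/
noncomputable def combNorm {𝕜 : Type*} [RCLike 𝕜] (𝓕 : Set (Finset ℕ)) (x : ℕ →₀ 𝕜) : ℝ :=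
  sSup {r : ℝ | ∃ F ∈ 𝓕, r = ∑ i ∈ F, ‖x i‖}

/-- The dual norm `‖f‖ = sup { |f x| : ‖x‖ ≤ 1 }` of a linear functional on `c₀₀`. -/
noncomputable def dualNorm {𝕜 : Type*} [RCLike 𝕜] (𝓕 : Set (Finset ℕ))
    (f : (ℕ →₀ 𝕜) →ₗ[𝕜] 𝕜) : ℝ :=
  sSup {r : ℝ | ∃ x : ℕ →₀ 𝕜, combNorm 𝓕 x ≤ 1 ∧ r = ‖f x‖}

section Aux

variable {𝕜 : Type*} [RCLike 𝕜] {𝓕 : Set (Finset ℕ)}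

lemma RegularFamily.empty_mem (h : RegularFamily 𝓕) : ∅ ∈ 𝓕 :=
  h.1 {0} (h.2.2.2 0) ∅ (Finset.empty_subset _)

lemma sum_norm_inter (x : ℕ →₀ 𝕜) (F : Finset ℕ) :
    ∑ i ∈ F, ‖x i‖ = ∑ i ∈ F ∩ x.support, ‖x i‖ := by
  refine (Finset.sum_subset Finset.inter_subset_left ?_).symm
  intro i hi hni
  have hns : i ∉ x.support := fun h => hni (Finset.mem_inter.2 ⟨hi, h⟩)
  simp [Finsupp.notMem_support_iff.1 hns]

lemma combNorm_bddAbove (x : ℕ →₀ 𝕜) :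
    BddAbove {r : ℝ | ∃ F ∈ 𝓕, r = ∑ i ∈ F, ‖x i‖} := by
  refine ⟨∑ i ∈ x.support, ‖x i‖, ?_⟩
  rintro r ⟨F, hF, rfl⟩
  rw [sum_norm_inter]
  exact Finset.sum_le_sum_of_subset_of_nonneg Finset.inter_subset_right
    (fun _ _ _ => norm_nonneg _)

lemma le_combNorm {F : Finset ℕ} (hF : F ∈ 𝓕) (x : ℕ →₀ 𝕜) :
    ∑ i ∈ F, ‖x i‖ ≤ combNorm 𝓕 x :=
  le_csSup (combNorm_bddAbove x) ⟨F, hF, rfl⟩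

lemma combNorm_le (h₀ : ∅ ∈ 𝓕) {x : ℕ →₀ 𝕜} {c : ℝ}
    (h : ∀ F ∈ 𝓕, ∑ i ∈ F, ‖x i‖ ≤ c) : combNorm 𝓕 x ≤ c :=
  csSup_le ⟨0, ∅, h₀, by simp⟩ (by rintro r ⟨F, hF, rfl⟩; exact h F hF)

lemma combNorm_nonneg (h₀ : ∅ ∈ 𝓕) (x : ℕ →₀ 𝕜) : 0 ≤ combNorm 𝓕 x := by
  simpa using le_combNorm (F := ∅) h₀ x

lemma combNorm_single_le (h₀ : ∅ ∈ 𝓕) (i : ℕ) (c : 𝕜) :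
    combNorm 𝓕 (Finsupp.single i c) ≤ ‖c‖ := by
  refine combNorm_le h₀ (fun F hF => ?_)
  have : ∀ j ∈ F, ‖(Finsupp.single i c : ℕ →₀ 𝕜) j‖ ≤ if j = i then ‖c‖ else 0 := by
    intro j hj
    rw [Finsupp.single_apply]
    by_cases h : i = j <;> simp [h, eq_comm]
  calc ∑ j ∈ F, ‖(Finsupp.single i c : ℕ →₀ 𝕜) j‖
      ≤ ∑ j ∈ F, if j = i then ‖c‖ else 0 := Finset.sum_le_sum this
    _ ≤ ‖c‖ := by
        rw [Finset.sum_ite_eq' F i (fun _ => ‖c‖)]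
        by_cases h : i ∈ F <;> simp [h]

lemma apply_eq_sum (g : (ℕ →₀ 𝕜) →ₗ[𝕜] 𝕜) (x : ℕ →₀ 𝕜) :
    g x = ∑ i ∈ x.support, x i * g (Finsupp.single i 1) := by
  conv_lhs => rw [← Finsupp.sum_single x]
  rw [Finsupp.sum, map_sum]
  refine Finset.sum_congr rfl fun i _ => ?_
  rw [← Finsupp.smul_single_one i (x i), map_smul, smul_eq_mul]

/-- The lift of a scalar sequence to a linear functional on `c₀₀`. -/
noncomputable def liftSeq (a : ℕ → 𝕜) : (ℕ →₀ 𝕜) →ₗ[𝕜] 𝕜 :=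
  Finsupp.linearCombination 𝕜 a

lemma liftSeq_apply (a : ℕ → 𝕜) (x : ℕ →₀ 𝕜) :
    liftSeq a x = ∑ i ∈ x.support, x i * a i := by
  rw [liftSeq, Finsupp.linearCombination_apply, Finsupp.sum]
  simp [smul_eq_mul]

/-- The coordinates of a linear functional on `c₀₀`. -/
noncomputable def toSeq (g : (ℕ →₀ 𝕜) →ₗ[𝕜] 𝕜) : ℕ → 𝕜 := fun i => g (Finsupp.single i 1)

lemma liftSeq_toSeq (g : (ℕ →₀ 𝕜) →ₗ[𝕜] 𝕜) : liftSeq (toSeq g) = g := by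
  refine Finsupp.lhom_ext fun a b => ?_
  rw [liftSeq, Finsupp.linearCombination_single, toSeq, ← Finsupp.smul_single_one a b,
    map_smul]

lemma toSeq_liftSeq (a : ℕ → 𝕜) : toSeq (liftSeq a) = a := by
  funext i
  rw [toSeq, liftSeq, Finsupp.linearCombination_single, one_smul]

lemma re_conj_mul_self (z : 𝕜) : RCLike.re ((starRingEnd 𝕜) z * z) = ‖z‖ ^ 2 := by
  rw [RCLike.conj_mul, ← RCLike.ofReal_pow, RCLike.ofReal_re]

lemma re_expand (α β : ℝ) (u v : 𝕜) :
    RCLike.re ((starRingEnd 𝕜) (α • u + β • v) * (α • u + β • v)) =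
      α ^ 2 * ‖u‖ ^ 2 + 2 * α * β * RCLike.re ((starRingEnd 𝕜) u * v) + β ^ 2 * ‖v‖ ^ 2 := by
  have h1 : (starRingEnd 𝕜) (α • u + β • v) * (α • u + β • v)
      = ((α ^ 2 : ℝ) : 𝕜) * ((starRingEnd 𝕜) u * u) + ((α * β : ℝ) : 𝕜) * ((starRingEnd 𝕜) u * v)
        + ((α * β : ℝ) : 𝕜) * ((starRingEnd 𝕜) v * u) + ((β ^ 2 : ℝ) : 𝕜) * ((starRingEnd 𝕜) v * v) := by
    simp only [RCLike.real_smul_eq_coe_mul, map_add, map_mul, RCLike.conj_ofReal]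
    push_cast
    ring
  have hsym : RCLike.re ((starRingEnd 𝕜) v * u) = RCLike.re ((starRingEnd 𝕜) u * v) := by
    rw [← RCLike.conj_re ((starRingEnd 𝕜) v * u), map_mul, RCLike.conj_conj, mul_comm]
  rw [h1]
  simp only [map_add, RCLike.re_ofReal_mul, re_conj_mul_self, hsym]
  ring

lemma scalar_strict {u v : 𝕜} {s t : ℝ} (hu : ‖u‖ ≤ 1) (hv : ‖v‖ ≤ 1) (hs : 0 < s) (ht : 0 < t)
    (hst : s + t = 1) (h : ‖s • u + t • v‖ = 1) : u = v := by
  set c := RCLike.re ((starRingEnd 𝕜) u * v) with hc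
  have hexp : s ^ 2 * ‖u‖ ^ 2 + 2 * s * t * c + t ^ 2 * ‖v‖ ^ 2 = 1 := by
    rw [hc, ← re_expand s t u v, re_conj_mul_self, h, one_pow]
  have hcle : c ≤ ‖u‖ * ‖v‖ := by
    refine le_trans (RCLike.re_le_norm _) ?_
    rw [norm_mul, RCLike.norm_conj]
  have hun : 0 ≤ ‖u‖ := norm_nonneg u
  have hvn : 0 ≤ ‖v‖ := norm_nonneg v
  have hab : 1 ≤ s * ‖u‖ + t * ‖v‖ := by
    nlinarith [mul_pos hs ht, mul_nonneg hs.le hun, mul_nonneg ht.le hvn,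
      mul_nonneg (mul_nonneg hs.le ht.le) (mul_nonneg hun hvn)]
  have ha : ‖u‖ = 1 := by
    refine le_antisymm hu ?_
    nlinarith [mul_nonneg ht.le (sub_nonneg.2 hv)]
  have hb : ‖v‖ = 1 := by
    refine le_antisymm hv ?_
    nlinarith [mul_nonneg hs.le (sub_nonneg.2 hu)]
  have hsq : s ^ 2 + 2 * s * t + t ^ 2 = 1 := by
    rw [show s ^ 2 + 2 * s * t + t ^ 2 = (s + t) ^ 2 by ring, hst, one_pow]
  have hst2 : 2 * s * t * (c - 1) = 0 := by
    rw [ha, hb] at hexp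
    linarith
  have h2st : (2 * s * t : ℝ) ≠ 0 := by positivity
  have hc1 : c = 1 := by
    have := (mul_eq_zero.mp hst2).resolve_left h2st
    linarith
  have hz : ‖u - v‖ ^ 2 = 0 := by
    have := re_expand 1 (-1) u v
    simp only [one_smul, neg_one_smul, ← sub_eq_add_neg] at this
    rw [re_conj_mul_self] at this
    rw [this, ha, hb, ← hc, hc1]
    ring
  have : u - v = 0 := by
    rwa [pow_eq_zero_iff (two_ne_zero), norm_eq_zero] at hz
  exact sub_eq_zero.mp this

lemma eq_of_values {g' g : (ℕ →₀ 𝕜) →ₗ[𝕜] 𝕜}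
    (h : ∀ i, g' (Finsupp.single i 1) = g (Finsupp.single i 1)) : g' = g := by
  refine Finsupp.lhom_ext fun a b => ?_
  rw [← Finsupp.smul_single_one a b, map_smul, map_smul, h a]

lemma sumF_apply (F : Finset ℕ) (θ : ℕ → 𝕜) (x : ℕ →₀ 𝕜) :
    (∑ i ∈ F, θ i • (Finsupp.lapply i : (ℕ →₀ 𝕜) →ₗ[𝕜] 𝕜)) x = ∑ i ∈ F, θ i * x i := by
  rw [LinearMap.sum_apply]
  refine Finset.sum_congr rfl fun i _ => ?_
  rw [LinearMap.smul_apply, Finsupp.lapply_apply, smul_eq_mul]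

lemma sumF_single (F : Finset ℕ) (θ : ℕ → 𝕜) (j : ℕ) :
    (∑ i ∈ F, θ i • (Finsupp.lapply i : (ℕ →₀ 𝕜) →ₗ[𝕜] 𝕜)) (Finsupp.single j 1)
      = if j ∈ F then θ j else 0 := by
  rw [sumF_apply]
  simp only [Finsupp.single_apply, mul_ite, mul_one, mul_zero]
  exact Finset.sum_ite_eq F j θ

lemma sumF_mem_ball (h₀ : ∅ ∈ 𝓕) {F : Finset ℕ} (hF : F ∈ 𝓕) {θ : ℕ → 𝕜}
    (hθ : ∀ i ∈ F, ‖θ i‖ = 1) (x : ℕ →₀ 𝕜) :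
    ‖(∑ i ∈ F, θ i • (Finsupp.lapply i : (ℕ →₀ 𝕜) →ₗ[𝕜] 𝕜)) x‖ ≤ combNorm 𝓕 x := by
  rw [sumF_apply]
  refine le_trans (norm_sum_le _ _) (le_trans ?_ (le_combNorm hF x))
  refine Finset.sum_le_sum fun i hi => ?_
  rw [norm_mul, hθ i hi, one_mul]

lemma values_eq_of_mem (hreg : RegularFamily 𝓕) {F : Finset ℕ} (hmax : MaximalIn 𝓕 F)
    {θ : ℕ → 𝕜} (hθ : ∀ i ∈ F, ‖θ i‖ = 1) {g' : (ℕ →₀ 𝕜) →ₗ[𝕜] 𝕜}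
    (hg' : ∀ x : ℕ →₀ 𝕜, ‖g' x‖ ≤ combNorm 𝓕 x)
    (hvals : ∀ j ∈ F, g' (Finsupp.single j 1) = θ j) :
    ∀ j, j ∉ F → g' (Finsupp.single j 1) = 0 := by
  intro j hj
  by_contra hu
  set u : 𝕜 := g' (Finsupp.single j 1) with hudef
  set c : ℕ → 𝕜 := fun k => if k = j then (‖u‖⁻¹ : ℝ) • (starRingEnd 𝕜) u
    else (starRingEnd 𝕜) (θ k) with hcdef
  set x : ℕ →₀ 𝕜 := ∑ k ∈ insert j F, Finsupp.single k (c k) with hxdef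
  have hxapp : ∀ m, x m = if m ∈ insert j F then c m else 0 := by
    intro m
    rw [hxdef, Finsupp.finset_sum_apply]
    simp only [Finsupp.single_apply]
    exact Finset.sum_ite_eq' (insert j F) m c
  have hcj : c j = (‖u‖⁻¹ : ℝ) • (starRingEnd 𝕜) u := by simp [hcdef]
  have hcF : ∀ m ∈ F, c m = (starRingEnd 𝕜) (θ m) := by
    intro m hmF
    have hmj : m ≠ j := fun h => hj (h ▸ hmF)
    rw [hcdef]
    exact if_neg hmj
  have hcnorm : ∀ m ∈ insert j F, ‖c m‖ = 1 := by
    intro m hm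
    rcases Finset.mem_insert.1 hm with rfl | hmF
    · rw [hcj, norm_smul, RCLike.norm_conj, norm_inv, norm_norm]
      field_simp [norm_ne_zero_iff.2 hu]
    · rw [hcF m hmF, RCLike.norm_conj]
      exact hθ m hmF
  have hgx : g' x = ((‖u‖ + F.card : ℝ) : 𝕜) := by
    rw [hxdef, map_sum]
    have hterm : ∀ k ∈ insert j F, g' (Finsupp.single k (c k)) = c k * g' (Finsupp.single k 1) := by
      intro k _
      rw [← Finsupp.smul_single_one k (c k), map_smul, smul_eq_mul]
    rw [Finset.sum_congr rfl hterm, Finset.sum_insert hj]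
    have h1 : c j * g' (Finsupp.single j 1) = ((‖u‖ : ℝ) : 𝕜) := by
      rw [hcj, ← hudef, smul_mul_assoc, RCLike.conj_mul]
      rw [RCLike.real_smul_eq_coe_mul]
      rw [← RCLike.ofReal_pow, ← RCLike.ofReal_mul]
      congr 1
      field_simp [norm_ne_zero_iff.2 hu]
    have h2 : ∀ k ∈ F, c k * g' (Finsupp.single k 1) = 1 := by
      intro k hk
      rw [hcF k hk, hvals k hk, RCLike.conj_mul, hθ k hk]
      norm_num
    rw [h1, Finset.sum_congr rfl h2, Finset.sum_const, nsmul_eq_mul, mul_one]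
    push_cast
    ring
  have hnorm : ‖g' x‖ = ‖u‖ + F.card := by
    rw [hgx, RCLike.norm_ofReal, abs_of_nonneg]
    positivity
  have hcomb : combNorm 𝓕 x ≤ F.card := by
    refine combNorm_le hreg.empty_mem fun G hG => ?_
    have hbound : ∀ m ∈ G, ‖x m‖ ≤ if m ∈ insert j F then 1 else 0 := by
      intro m _
      rw [hxapp m]
      by_cases hm : m ∈ insert j F
      · rw [if_pos hm, if_pos hm]
        exact le_of_eq (hcnorm m hm)
      · rw [if_neg hm, if_neg hm, norm_zero]
    refine le_trans (Finset.sum_le_sum hbound) ?_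
    rw [Finset.sum_ite_mem, Finset.sum_const, nsmul_eq_mul, mul_one]
    have hcard : (G ∩ insert j F).card ≤ F.card := by
      by_contra hlt
      push_neg at hlt
      have hsub : G ∩ insert j F ⊆ insert j F := Finset.inter_subset_right
      have hcardle : (insert j F).card ≤ (G ∩ insert j F).card := by
        rw [Finset.card_insert_of_notMem hj]
        omega
      have heq : G ∩ insert j F = insert j F := Finset.eq_of_subset_of_card_le hsub hcardle
      have hmem : insert j F ∈ 𝓕 := by
        rw [← heq]
        exact hreg.1 G hG _ Finset.inter_subset_left
      have := hmax.2 _ hmem (Finset.subset_insert j F)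
      exact hj (this ▸ Finset.mem_insert_self j F)
    exact_mod_cast hcard
  have := le_trans (hnorm ▸ hg' x) hcomb
  have hun : ‖u‖ ≤ 0 := by linarith
  exact hu (norm_le_zero_iff.1 hun)

lemma maximal_mem_extremePoints (hreg : RegularFamily 𝓕) {F : Finset ℕ}
    (hmax : MaximalIn 𝓕 F) {θ : ℕ → 𝕜} (hθ : ∀ i ∈ F, ‖θ i‖ = 1) :
    (∑ i ∈ F, θ i • (Finsupp.lapply i : (ℕ →₀ 𝕜) →ₗ[𝕜] 𝕜)) ∈
      Set.extremePoints ℝ {g : (ℕ →₀ 𝕜) →ₗ[𝕜] 𝕜 | ∀ x : ℕ →₀ 𝕜, ‖g x‖ ≤ combNorm 𝓕 x} := by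
  set g : (ℕ →₀ 𝕜) →ₗ[𝕜] 𝕜 := ∑ i ∈ F, θ i • (Finsupp.lapply i : (ℕ →₀ 𝕜) →ₗ[𝕜] 𝕜) with hgdef
  refine mem_extremePoints.2 ⟨fun x => sumF_mem_ball hreg.empty_mem hmax.1 hθ x, ?_⟩
  intro g₁ hg₁ g₂ hg₂ hseg
  obtain ⟨s, t, hs, ht, hst, heq⟩ := hseg
  have hnorm1 : ∀ (g' : (ℕ →₀ 𝕜) →ₗ[𝕜] 𝕜), (∀ x : ℕ →₀ 𝕜, ‖g' x‖ ≤ combNorm 𝓕 x) →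
      ∀ i, ‖g' (Finsupp.single i 1)‖ ≤ 1 := by
    intro g' hg' i
    refine le_trans (hg' _) ?_
    simpa using combNorm_single_le (𝓕 := 𝓕) hreg.empty_mem i (1 : 𝕜)
  have key : ∀ i ∈ F, g₁ (Finsupp.single i 1) = θ i ∧ g₂ (Finsupp.single i 1) = θ i := by
    intro i hi
    have happ : s • g₁ (Finsupp.single i 1) + t • g₂ (Finsupp.single i 1) = θ i := by
      have h' := congrArg (fun h : (ℕ →₀ 𝕜) →ₗ[𝕜] 𝕜 => h (Finsupp.single i 1)) heq
      simp only [LinearMap.add_apply, LinearMap.smul_apply] at h'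
      rw [h', hgdef, sumF_single, if_pos hi]
    have hn : ‖s • g₁ (Finsupp.single i 1) + t • g₂ (Finsupp.single i 1)‖ = 1 := by
      rw [happ]; exact hθ i hi
    have huv := scalar_strict (hnorm1 g₁ hg₁ i) (hnorm1 g₂ hg₂ i) hs ht hst hn
    have h2 : g₂ (Finsupp.single i 1) = θ i := by
      rw [← huv, ← add_smul, hst, one_smul] at happ
      rw [← huv, happ]
    exact ⟨huv ▸ h2, h2⟩
  have hz1 := values_eq_of_mem hreg hmax hθ hg₁ (fun j hj => (key j hj).1)
  have hz2 := values_eq_of_mem hreg hmax hθ hg₂ (fun j hj => (key j hj).2)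
  have hgval : ∀ i, g (Finsupp.single i 1) = if i ∈ F then θ i else 0 := fun i => by
    rw [hgdef, sumF_single]
  constructor
  · refine eq_of_values fun i => ?_
    by_cases hi : i ∈ F
    · rw [(key i hi).1, hgval, if_pos hi]
    · rw [hz1 i hi, hgval, if_neg hi]
  · refine eq_of_values fun i => ?_
    by_cases hi : i ∈ F
    · rw [(key i hi).2, hgval, if_pos hi]
    · rw [hz2 i hi, hgval, if_neg hi]

/-- The dual ball, in sequence coordinates. -/
def seqBall (𝕜 : Type*) [RCLike 𝕜] (𝓕 : Set (Finset ℕ)) : Set (ℕ → 𝕜) :=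
  {a | ∀ x : ℕ →₀ 𝕜, ‖liftSeq a x‖ ≤ combNorm 𝓕 x}

/-- The candidate extreme points, in sequence coordinates. -/
def seqSigns (𝕜 : Type*) [RCLike 𝕜] (𝓕 : Set (Finset ℕ)) : Set (ℕ → 𝕜) :=
  {a | ∃ F ∈ 𝓕, ∃ θ : ℕ → 𝕜, (∀ i ∈ F, ‖θ i‖ = 1) ∧
    a = fun i => if i ∈ F then θ i else 0}

lemma liftSeq_real_combo (s t : ℝ) (a₁ a₂ : ℕ → 𝕜) (x : ℕ →₀ 𝕜) :
    liftSeq (s • a₁ + t • a₂) x = s • liftSeq a₁ x + t • liftSeq a₂ x := by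
  simp only [liftSeq_apply, Pi.add_apply, Pi.smul_apply, mul_add, mul_smul_comm,
    Finset.sum_add_distrib, Finset.smul_sum]

lemma convex_seqBall (h₀ : ∅ ∈ 𝓕) : Convex ℝ (seqBall 𝕜 𝓕) := by
  intro a₁ h₁ a₂ h₂ s t hs ht hst
  intro x
  rw [liftSeq_real_combo]
  calc ‖s • liftSeq a₁ x + t • liftSeq a₂ x‖
      ≤ ‖s • liftSeq a₁ x‖ + ‖t • liftSeq a₂ x‖ := norm_add_le _ _
    _ ≤ s * combNorm 𝓕 x + t * combNorm 𝓕 x := by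
        gcongr
        · rw [norm_smul, Real.norm_eq_abs, abs_of_nonneg hs]
          exact mul_le_mul_of_nonneg_left (h₁ x) hs
        · rw [norm_smul, Real.norm_eq_abs, abs_of_nonneg ht]
          exact mul_le_mul_of_nonneg_left (h₂ x) ht
    _ = combNorm 𝓕 x := by rw [← add_mul, hst, one_mul]

lemma isClosed_seqBall : IsClosed (seqBall 𝕜 𝓕) := by
  have : seqBall 𝕜 𝓕 = ⋂ x : ℕ →₀ 𝕜,
      {a : ℕ → 𝕜 | ‖∑ i ∈ x.support, x i * a i‖ ≤ combNorm 𝓕 x} := by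
    ext a
    simp only [seqBall, Set.mem_setOf_eq, Set.mem_iInter, liftSeq_apply]
  rw [this]
  refine isClosed_iInter fun x => ?_
  have hcont : Continuous fun a : ℕ → 𝕜 => ‖∑ i ∈ x.support, x i * a i‖ :=
    (continuous_finset_sum _ fun i _ => continuous_const.mul (continuous_apply i)).norm
  exact isClosed_le hcont continuous_const

lemma seqBall_subset_pi (h₀ : ∅ ∈ 𝓕) :
    seqBall 𝕜 𝓕 ⊆ Set.pi Set.univ (fun _ : ℕ => Metric.closedBall (0 : 𝕜) 1) := by
  intro a ha i _
  rw [mem_closedBall_zero_iff]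
  have := ha (Finsupp.single i 1)
  rw [liftSeq_apply, Finsupp.support_single_ne_zero i one_ne_zero] at this
  simp only [Finset.sum_singleton, Finsupp.single_eq_same, one_mul] at this
  refine le_trans this ?_
  simpa using combNorm_single_le (𝓕 := 𝓕) h₀ i (1 : 𝕜)

lemma isCompact_seqBall (h₀ : ∅ ∈ 𝓕) : IsCompact (seqBall 𝕜 𝓕) :=
  IsCompact.of_isClosed_subset
    (isCompact_univ_pi fun _ => isCompact_closedBall _ _)
    isClosed_seqBall (seqBall_subset_pi h₀)

lemma seqSigns_subset_seqBall : seqSigns 𝕜 𝓕 ⊆ seqBall 𝕜 𝓕 := by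
  rintro a ⟨F, hF, θ, hθ, rfl⟩ x
  rw [liftSeq_apply]
  have hterm : ∀ i ∈ x.support,
      ‖x i * (if i ∈ F then θ i else 0)‖ ≤ if i ∈ F then ‖x i‖ else 0 := by
    intro i _
    by_cases hi : i ∈ F
    · rw [if_pos hi, if_pos hi, norm_mul, hθ i hi, mul_one]
    · rw [if_neg hi, if_neg hi, mul_zero, norm_zero]
  refine le_trans (norm_sum_le _ _) (le_trans (Finset.sum_le_sum hterm) ?_)
  rw [Finset.sum_ite_mem]
  refine le_trans ?_ (le_combNorm hF x)
  rw [sum_norm_inter (x := x) F, Finset.inter_comm]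

lemma isClosed_seqSigns (hcf : CompactFamily 𝓕) : IsClosed (seqSigns 𝕜 𝓕) := by
  rw [← isSeqClosed_iff_isClosed]
  intro A p hA hlim
  choose F hF θ hθ hAeq using hA
  set S : Set (ℕ → Bool) := {f | ∃ G ∈ 𝓕, f = fun n => decide (n ∈ G)} with hSdef
  have hScl : IsClosed S := hcf
  have hScompact : IsCompact S := hScl.isCompact
  have hfS : ∀ n, (fun i => decide (i ∈ F n)) ∈ S := fun n => ⟨F n, hF n, rfl⟩
  obtain ⟨flim, hflimS, φ, hφ, hconv⟩ := hScompact.isSeqCompact hfS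
  obtain ⟨G, hG, hGeq⟩ := hflimS
  have hconvA : ∀ i, Filter.Tendsto (fun n => A (φ n) i) Filter.atTop (nhds (p i)) :=
    fun i => tendsto_pi_nhds.1 (hlim.comp hφ.tendsto_atTop) i
  have hev : ∀ i, ∀ᶠ n in Filter.atTop, decide (i ∈ F (φ n)) = flim i := by
    intro i
    have hb : Filter.Tendsto (fun n => decide (i ∈ F (φ n))) Filter.atTop (nhds (flim i)) :=
      tendsto_pi_nhds.1 hconv i
    exact hb (IsOpen.mem_nhds (isOpen_discrete {flim i}) rfl)
  have hmain : ∀ i, (i ∈ G → ‖p i‖ = 1) ∧ (i ∉ G → p i = 0) := by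
    intro i
    constructor
    · intro hiG
      have hft : flim i = true := by rw [hGeq]; simpa using hiG
      have h1 : ∀ᶠ n in Filter.atTop, ‖A (φ n) i‖ = 1 := by
        filter_upwards [hev i] with n hn
        rw [hft] at hn
        have hiF : i ∈ F (φ n) := by simpa using hn
        rw [hAeq (φ n)]
        simp only [if_pos hiF]
        exact hθ (φ n) i hiF
      have h2 : Filter.Tendsto (fun n => ‖A (φ n) i‖) Filter.atTop (nhds ‖p i‖) :=
        (hconvA i).norm
      have h3 : Filter.Tendsto (fun _ : ℕ => (1 : ℝ)) Filter.atTop (nhds ‖p i‖) :=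
        h2.congr' (by filter_upwards [h1] with n hn using hn)
      exact tendsto_nhds_unique h3 tendsto_const_nhds
    · intro hiG
      have hft : flim i = false := by rw [hGeq]; simpa using hiG
      have h1 : ∀ᶠ n in Filter.atTop, A (φ n) i = 0 := by
        filter_upwards [hev i] with n hn
        rw [hft] at hn
        have hiF : i ∉ F (φ n) := by simpa using hn
        rw [hAeq (φ n)]
        simp only [if_neg hiF]
      have h3 : Filter.Tendsto (fun _ : ℕ => (0 : 𝕜)) Filter.atTop (nhds (p i)) :=
        (hconvA i).congr' (by filter_upwards [h1] with n hn using hn)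
      exact tendsto_nhds_unique h3 tendsto_const_nhds
  refine ⟨G, hG, fun i => if i ∈ G then p i else 1, ?_, ?_⟩
  · intro i hi
    show ‖if i ∈ G then p i else 1‖ = 1
    rw [if_pos hi]
    exact (hmain i).1 hi
  · funext i
    show p i = if i ∈ G then (if i ∈ G then p i else 1) else 0
    by_cases hi : i ∈ G
    · rw [if_pos hi, if_pos hi]
    · rw [if_neg hi]
      exact (hmain i).2 hi

lemma re_I_mul (z : 𝕜) : RCLike.re ((RCLike.I : 𝕜) * z) = -RCLike.im z := by
  rw [RCLike.mul_re, RCLike.I_re, RCLike.I_im', zero_mul, zero_sub]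

lemma seqBall_subset_closed_convex (hreg : RegularFamily 𝓕) {C : Set (ℕ → 𝕜)}
    (hCcl : IsClosed C) (hCconv : Convex ℝ C) (hKC : seqSigns 𝕜 𝓕 ⊆ C) :
    seqBall 𝕜 𝓕 ⊆ C := by
  intro a ha
  by_contra haC
  obtain ⟨f, u, hfC, hfa⟩ := geometric_hahn_banach_closed_point hCconv hCcl haC
  -- `f` only depends on finitely many coordinates
  have h0mem : (0 : ℕ → 𝕜) ∈ f ⁻¹' Metric.ball (0 : ℝ) 1 := by
    simp [Metric.mem_ball, map_zero]
  obtain ⟨I, U, hU, hpi⟩ :=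
    (isOpen_pi_iff.1 (Metric.isOpen_ball.preimage f.continuous)) 0 h0mem
  have hvanish : ∀ b : ℕ → 𝕜, (∀ i ∈ I, b i = 0) → f b = 0 := by
    intro b hb
    by_contra hfb
    have hmem : ∀ t : ℝ, t • b ∈ (↑I : Set ℕ).pi U := by
      intro t i hi
      have hbi : b i = 0 := hb i hi
      have : (t • b) i = 0 := by rw [Pi.smul_apply, hbi, smul_zero]
      rw [this]
      exact (hU i hi).2
    have habs : ∀ t : ℝ, |t * f b| < 1 := by
      intro t
      have h1 := hpi (hmem t)
      simp only [Set.mem_preimage, Metric.mem_ball, dist_zero_right, Real.norm_eq_abs] at h1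
      rwa [map_smul, smul_eq_mul] at h1
    have h2 := habs (|f b|⁻¹)
    rw [abs_mul, abs_inv, abs_abs, inv_mul_cancel₀ (abs_ne_zero.2 hfb)] at h2
    exact absurd h2 (lt_irrefl 1)
  set w : ℕ → 𝕜 := fun i =>
    (f (Pi.single i 1) : ℝ) • (1 : 𝕜) + (f (Pi.single i RCLike.I) : ℝ) • (RCLike.I : 𝕜)
    with hwdef
  have hkey : ∀ (i : ℕ) (z : 𝕜), f (Pi.single i z) = RCLike.re ((starRingEnd 𝕜) (w i) * z) := by
    intro i z
    have hz : z = (RCLike.re z : ℝ) • (1 : 𝕜) + (RCLike.im z : ℝ) • RCLike.I := by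
      rw [RCLike.real_smul_eq_coe_mul, RCLike.real_smul_eq_coe_mul, mul_one]
      exact (RCLike.re_add_im z).symm
    have hconjw : (starRingEnd 𝕜) (w i)
        = ((f (Pi.single i 1) : ℝ) : 𝕜) - ((f (Pi.single i RCLike.I) : ℝ) : 𝕜) * RCLike.I := by
      simp only [hwdef, RCLike.real_smul_eq_coe_mul, mul_one, map_add, map_mul,
        RCLike.conj_ofReal, RCLike.conj_I]
      ring
    have hL : f (Pi.single i z)
        = RCLike.re z * f (Pi.single i 1) + RCLike.im z * f (Pi.single i RCLike.I) := by
      conv_lhs => rw [hz]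
      rw [Pi.single_add, Pi.single_smul, Pi.single_smul, map_add, map_smul, map_smul,
        smul_eq_mul, smul_eq_mul]
    rw [hL, hconjw, sub_mul, mul_assoc, map_sub, RCLike.re_ofReal_mul, RCLike.re_ofReal_mul,
      re_I_mul]
    ring
  set x : ℕ →₀ 𝕜 := ∑ i ∈ I, Finsupp.single i ((starRingEnd 𝕜) (w i)) with hxdef
  have hxapp : ∀ m, x m = if m ∈ I then (starRingEnd 𝕜) (w m) else 0 := by
    intro m
    rw [hxdef, Finsupp.finset_sum_apply]
    simp only [Finsupp.single_apply]
    exact Finset.sum_ite_eq' I m _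
  have hdecomp : ∀ b : ℕ → 𝕜, f b = ∑ i ∈ I, f (Pi.single i (b i)) := by
    intro b
    have hsub : f b - f (fun n => if n ∈ I then b n else 0)
        = f (fun n => if n ∈ I then 0 else b n) := by
      rw [← map_sub]
      congr 1
      funext n
      by_cases hn : n ∈ I <;> simp [hn]
    have hv : f (fun n => if n ∈ I then (0 : 𝕜) else b n) = 0 :=
      hvanish _ (fun i hi => if_pos hi)
    have hsplit : f b = f (fun n => if n ∈ I then b n else 0) := by
      have := hsub.trans hv
      linarith [this]
    have hfun : (fun n => if n ∈ I then b n else 0) = ∑ i ∈ I, Pi.single i (b i) := by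
      funext n
      rw [Finset.sum_apply]
      exact (Finset.sum_pi_single n b I).symm
    rw [hsplit, hfun, map_sum]
  have hfval : ∀ b : ℕ → 𝕜,
      f b = RCLike.re (∑ i ∈ I, (starRingEnd 𝕜) (w i) * b i) := by
    intro b
    rw [hdecomp b, map_sum]
    exact Finset.sum_congr rfl fun i _ => hkey i (b i)
  -- upper estimate : `f a ≤ combNorm x`
  have hsupp : x.support ⊆ I := by
    intro m hm
    by_contra hmI
    exact (Finsupp.mem_support_iff.1 hm) (by rw [hxapp m, if_neg hmI])
  have key_sum : ∀ b : ℕ → 𝕜,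
      ∑ i ∈ I, (starRingEnd 𝕜) (w i) * b i = liftSeq b x := by
    intro b
    rw [liftSeq_apply]
    rw [Finset.sum_subset hsupp (fun i _ hni => by
      rw [Finsupp.notMem_support_iff.1 hni, zero_mul])]
    refine Finset.sum_congr rfl fun i hi => ?_
    rw [hxapp i, if_pos hi]
  have hfa_le : f a ≤ combNorm 𝓕 x := by
    rw [hfval a, key_sum a]
    exact le_trans (RCLike.re_le_norm _) (ha x)
  -- lower estimate : `combNorm x ≤ u`
  have hcomb_le : combNorm 𝓕 x ≤ u := by
    refine combNorm_le hreg.empty_mem fun F hF => ?_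
    set θ : ℕ → 𝕜 := fun i => if w i = 0 then 1 else (‖w i‖⁻¹ : ℝ) • w i with hθdef
    have hθn : ∀ i, ‖θ i‖ = 1 := by
      intro i
      by_cases hwi : w i = 0
      · simp [hθdef, hwi]
      · simp only [hθdef, if_neg hwi]
        rw [norm_smul, norm_inv, norm_norm]
        field_simp [norm_ne_zero_iff.2 hwi]
    set b : ℕ → 𝕜 := fun i => if i ∈ F then θ i else 0 with hbdef
    have hbK : b ∈ seqSigns 𝕜 𝓕 := ⟨F, hF, θ, fun i _ => hθn i, rfl⟩
    have hfb : f b < u := hfC b (hKC hbK)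
    have hre : ∀ i, RCLike.re ((starRingEnd 𝕜) (w i) * θ i) = ‖w i‖ := by
      intro i
      by_cases hwi : w i = 0
      · simp [hθdef, hwi]
      · simp only [hθdef, if_neg hwi]
        rw [mul_smul_comm, RCLike.conj_mul, RCLike.smul_re, ← RCLike.ofReal_pow,
          RCLike.ofReal_re]
        field_simp [norm_ne_zero_iff.2 hwi]
    have hfbeq : f b = ∑ i ∈ I, if i ∈ F then ‖w i‖ else (0 : ℝ) := by
      rw [hfval b, map_sum]
      refine Finset.sum_congr rfl fun i _ => ?_
      by_cases hiF : i ∈ F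
      · simp only [hbdef, if_pos hiF]
        exact hre i
      · simp only [hbdef, if_neg hiF]
        rw [mul_zero, map_zero]
    have hxF : ∑ m ∈ F, ‖x m‖ = ∑ i ∈ I, if i ∈ F then ‖w i‖ else (0 : ℝ) := by
      have hterm : ∀ m ∈ F, ‖x m‖ = if m ∈ I then ‖w m‖ else 0 := by
        intro m _
        rw [hxapp m]
        by_cases hm : m ∈ I
        · rw [if_pos hm, if_pos hm, RCLike.norm_conj]
        · rw [if_neg hm, if_neg hm, norm_zero]
      rw [Finset.sum_congr rfl hterm, Finset.sum_ite_mem, Finset.sum_ite_mem,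
        Finset.inter_comm]
    rw [hxF, ← hfbeq]
    exact le_of_lt hfb
  exact absurd hfa (not_lt.2 (le_trans hfa_le hcomb_le))

lemma isCompact_convexJoin {s t : Set (ℕ → 𝕜)} (hs : IsCompact s) (ht : IsCompact t) :
    IsCompact (convexJoin ℝ s t) := by
  have himg : convexJoin ℝ s t =
      (fun p : ℝ × (ℕ → 𝕜) × (ℕ → 𝕜) => (1 - p.1) • p.2.1 + p.1 • p.2.2) ''
        (Set.Icc (0:ℝ) 1 ×ˢ s ×ˢ t) := by
    ext z
    constructor
    · intro hz
      obtain ⟨a, has, b, hbt, hseg⟩ := mem_convexJoin.1 hz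
      rw [segment_eq_image] at hseg
      obtain ⟨θ, hθ, hzeq⟩ := hseg
      exact ⟨(θ, a, b), ⟨hθ, has, hbt⟩, hzeq⟩
    · rintro ⟨⟨θ, a, b⟩, ⟨hθ, has, hbt⟩, rfl⟩
      refine mem_convexJoin.2 ⟨a, has, b, hbt, ?_⟩
      rw [segment_eq_image]
      exact ⟨θ, hθ, rfl⟩
  rw [himg]
  refine (isCompact_Icc.prod (hs.prod ht)).image ?_
  fun_prop

lemma isCompact_convexHull_biUnion {ι : Type*} (S : Finset ι) (D : ι → Set (ℕ → 𝕜))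
    (hD : ∀ j ∈ S, IsCompact (D j)) (hDc : ∀ j ∈ S, Convex ℝ (D j))
    (hne : ∀ j ∈ S, (D j).Nonempty) :
    IsCompact (convexHull ℝ (⋃ j ∈ S, D j)) := by
  classical
  induction S using Finset.induction_on with
  | empty => simp [convexHull_empty]
  | @insert a S' haS IH =>
    have hunion : ⋃ j ∈ insert a S', D j = D a ∪ ⋃ j ∈ S', D j := by
      simp [Finset.set_biUnion_insert]
    rw [hunion]
    rcases S'.eq_empty_or_nonempty with rfl | hS'ne
    · simp only [Finset.notMem_empty, Set.iUnion_of_empty, Set.iUnion_empty, Set.union_empty]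
      rw [(hDc a (Finset.mem_insert_self a ∅)).convexHull_eq]
      exact hD a (Finset.mem_insert_self a ∅)
    · have hane : (D a).Nonempty := hne a (Finset.mem_insert_self a S')
      have hUne : (⋃ j ∈ S', D j).Nonempty := by
        obtain ⟨j, hj⟩ := hS'ne
        obtain ⟨y, hy⟩ := hne j (Finset.mem_insert_of_mem hj)
        exact ⟨y, Set.mem_biUnion hj hy⟩
      rw [convexHull_union hane hUne]
      have hhulla : (convexHull ℝ) (D a) = D a :=
        (hDc a (Finset.mem_insert_self a S')).convexHull_eq
      rw [hhulla]
      refine isCompact_convexJoin (hD a (Finset.mem_insert_self a S')) ?_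
      exact IH (fun j hj => hD j (Finset.mem_insert_of_mem hj))
        (fun j hj => hDc j (Finset.mem_insert_of_mem hj))
        (fun j hj => hne j (Finset.mem_insert_of_mem hj))

lemma extremePoint_eq_of_combo {s : Set (ℕ → 𝕜)} (hconv : Convex ℝ s) {e : ℕ → 𝕜}
    (he : e ∈ Set.extremePoints ℝ s) {ι : Type*} :
    ∀ (T : Finset ι) (wt : ι → ℝ) (z : ι → ℕ → 𝕜), (∀ j ∈ T, 0 ≤ wt j) →
      (∑ j ∈ T, wt j = 1) → (∀ j ∈ T, z j ∈ s) → (∑ j ∈ T, wt j • z j = e) →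
      ∃ j ∈ T, z j = e := by
  classical
  intro T
  induction T using Finset.induction_on with
  | empty => intro wt z _ h1 _ _; simp at h1
  | @insert a T' haT IH =>
    intro wt z hw0 hw1 hz heq
    rw [Finset.sum_insert haT] at hw1 heq
    by_cases hwa0 : wt a = 0
    · obtain ⟨j, hj, hje⟩ := IH wt z (fun j hj => hw0 j (Finset.mem_insert_of_mem hj))
        (by rw [hwa0, zero_add] at hw1; exact hw1)
        (fun j hj => hz j (Finset.mem_insert_of_mem hj))
        (by rw [hwa0, zero_smul, zero_add] at heq; exact heq)
      exact ⟨j, Finset.mem_insert_of_mem hj, hje⟩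
    have hwa : 0 < wt a := lt_of_le_of_ne (hw0 a (Finset.mem_insert_self a T')) (Ne.symm hwa0)
    by_cases hwa1 : wt a = 1
    · have hrest : ∀ j ∈ T', wt j = 0 := by
        have hsum0 : ∑ j ∈ T', wt j = 0 := by rw [hwa1] at hw1; linarith
        exact (Finset.sum_eq_zero_iff_of_nonneg
          (fun j hj => hw0 j (Finset.mem_insert_of_mem hj))).1 hsum0
      have : e = z a := by
        rw [← heq, hwa1, one_smul, Finset.sum_eq_zero (fun j hj => by
          rw [hrest j hj, zero_smul]), add_zero]
      exact ⟨a, Finset.mem_insert_self a T', this.symm⟩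
    have hwa1' : wt a < 1 := by
      rcases lt_or_ge (wt a) 1 with h | h
      · exact h
      · exfalso
        have : ∑ j ∈ T', wt j ≤ 0 := by linarith
        have h0 : ∑ j ∈ T', wt j ≥ 0 :=
          Finset.sum_nonneg (fun j hj => hw0 j (Finset.mem_insert_of_mem hj))
        have : ∑ j ∈ T', wt j = 0 := le_antisymm ‹_› h0
        exact hwa1 (by linarith)
    have h1wa : 0 < 1 - wt a := by linarith
    set y : ℕ → 𝕜 := (1 - wt a)⁻¹ • ∑ j ∈ T', wt j • z j with hydef
    have hy : y ∈ s := by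
      have hsum' : ∑ j ∈ T', (1 - wt a)⁻¹ * wt j = 1 := by
        rw [← Finset.mul_sum]
        field_simp
        linarith
      have := hconv.sum_mem (t := T') (w := fun j => (1 - wt a)⁻¹ * wt j) (z := z)
        (fun j hj => mul_nonneg (inv_nonneg.2 h1wa.le) (hw0 j (Finset.mem_insert_of_mem hj)))
        hsum' (fun j hj => hz j (Finset.mem_insert_of_mem hj))
      rw [hydef, Finset.smul_sum]
      convert this using 2 with j
      rw [smul_smul]
    have hseg : e ∈ openSegment ℝ (z a) y := by
      refine ⟨wt a, 1 - wt a, hwa, h1wa, by ring, ?_⟩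
      rw [hydef, smul_inv_smul₀ (ne_of_gt h1wa)]
      exact heq
    have := he.2 (hz a (Finset.mem_insert_self a T')) hy hseg
    exact ⟨a, Finset.mem_insert_self a T', this⟩

lemma exists_eps_forall_ball (I : Finset ℕ) (U : ℕ → Set 𝕜) (e : ℕ → 𝕜)
    (h : ∀ i ∈ I, IsOpen (U i) ∧ e i ∈ U i) :
    ∃ ε > 0, ∀ i ∈ I, Metric.ball (e i) ε ⊆ U i := by
  classical
  induction I using Finset.induction_on with
  | empty => exact ⟨1, one_pos, by simp⟩
  | @insert a I' haI IH =>
    obtain ⟨ε, hε, hballs⟩ := IH (fun i hi => h i (Finset.mem_insert_of_mem hi))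
    obtain ⟨δ, hδ, hsub⟩ := Metric.isOpen_iff.1 (h a (Finset.mem_insert_self a I')).1 (e a)
      (h a (Finset.mem_insert_self a I')).2
    refine ⟨min ε δ, lt_min hε hδ, fun i hi => ?_⟩
    rcases Finset.mem_insert.1 hi with rfl | hi'
    · exact (Metric.ball_subset_ball (min_le_right ε δ)).trans hsub
    · exact (Metric.ball_subset_ball (min_le_left ε δ)).trans (hballs i hi')

lemma extremePoints_seqBall_subset (hreg : RegularFamily 𝓕) :
    Set.extremePoints ℝ (seqBall 𝕜 𝓕) ⊆ seqSigns 𝕜 𝓕 := by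
  classical
  intro e he
  have hclosed : IsClosed (seqSigns 𝕜 𝓕) := isClosed_seqSigns hreg.2.2.1
  have hKcomp : IsCompact (seqSigns 𝕜 𝓕) :=
    IsCompact.of_isClosed_subset (isCompact_seqBall hreg.empty_mem) hclosed
      seqSigns_subset_seqBall
  rw [← hclosed.closure_eq, mem_closure_iff]
  intro O hO heO
  obtain ⟨I, U, hU, hpi⟩ := isOpen_pi_iff.1 hO e heO
  obtain ⟨ε, hε, hballs⟩ := exists_eps_forall_ball I U e hU
  set K := seqSigns 𝕜 𝓕 with hKdef
  set W : (ℕ → 𝕜) → Set (ℕ → 𝕜) :=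
    fun b => Set.pi ↑I (fun i => Metric.ball (b i) (ε/2)) with hWdef
  have hWopen : ∀ b, IsOpen (W b) := fun b =>
    isOpen_set_pi I.finite_toSet (fun i _ => Metric.isOpen_ball)
  have hcover : K ⊆ ⋃ b : ↥K, W ↑b := by
    intro k hk
    exact Set.mem_iUnion.2 ⟨⟨k, hk⟩, fun i _ => Metric.mem_ball_self (half_pos hε)⟩
  obtain ⟨T, hT⟩ := hKcomp.elim_finite_subcover (fun b : ↥K => W ↑b)
    (fun b => hWopen ↑b) hcover
  set Cj : (ℕ → 𝕜) → Set (ℕ → 𝕜) :=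
    fun b => Set.pi ↑I (fun i => Metric.closedBall (b i) (ε/2)) with hCjdef
  have hCjclosed : ∀ b, IsClosed (Cj b) := fun b =>
    isClosed_set_pi (fun i _ => Metric.isClosed_closedBall)
  have hCjconvex : ∀ b, Convex ℝ (Cj b) := fun b =>
    convex_pi (fun i _ => convex_closedBall _ _)
  set T' : Finset ↥K := T.filter (fun b => (K ∩ Cj ↑b).Nonempty) with hT'def
  set D : ↥K → Set (ℕ → 𝕜) := fun b => closure (convexHull ℝ (K ∩ Cj ↑b)) with hDdef
  have hDsub : ∀ b, D b ⊆ seqBall 𝕜 𝓕 := by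
    intro b
    refine closure_minimal (convexHull_min ?_ (convex_seqBall hreg.empty_mem)) isClosed_seqBall
    exact Set.inter_subset_left.trans seqSigns_subset_seqBall
  have hDcomp : ∀ b, IsCompact (D b) := fun b =>
    IsCompact.of_isClosed_subset (isCompact_seqBall hreg.empty_mem) isClosed_closure (hDsub b)
  have hDconv : ∀ b, Convex ℝ (D b) := fun b => (convex_convexHull ℝ _).closure
  have hDC : ∀ b, D b ⊆ Cj ↑b := fun b =>
    closure_minimal (convexHull_min Set.inter_subset_right (hCjconvex ↑b)) (hCjclosed ↑b)
  have hDne : ∀ b ∈ T', (D b).Nonempty := by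
    intro b hb
    obtain ⟨k, hk⟩ := (Finset.mem_filter.1 hb).2
    exact ⟨k, subset_closure (subset_convexHull ℝ _ hk)⟩
  have hKCstar : K ⊆ convexHull ℝ (⋃ b ∈ T', D b) := by
    intro k hk
    obtain ⟨b, hbT, hkW⟩ := Set.mem_iUnion₂.1 (hT hk)
    have hkC : k ∈ Cj ↑b := fun i hi => Metric.ball_subset_closedBall (hkW i hi)
    have hbT' : b ∈ T' := Finset.mem_filter.2 ⟨hbT, ⟨k, hk, hkC⟩⟩
    exact subset_convexHull ℝ _
      (Set.mem_biUnion hbT' (subset_closure (subset_convexHull ℝ _ ⟨hk, hkC⟩)))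
  have hCstar_comp : IsCompact (convexHull ℝ (⋃ b ∈ T', D b)) :=
    isCompact_convexHull_biUnion T' D (fun b _ => hDcomp b) (fun b _ => hDconv b) hDne
  have hmem := seqBall_subset_closed_convex hreg hCstar_comp.isClosed
    (convex_convexHull ℝ _) hKCstar he.1
  rw [convexHull_eq] at hmem
  obtain ⟨ι', t, wt, z, hw0, hw1, hz, hcm⟩ := hmem
  rw [Finset.centerMass_eq_of_sum_1 _ _ hw1] at hcm
  have hzball : ∀ j ∈ t, z j ∈ seqBall 𝕜 𝓕 := by
    intro j hj
    obtain ⟨b, _, hmem'⟩ := Set.mem_iUnion₂.1 (hz j hj)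
    exact hDsub b hmem'
  obtain ⟨j, hjt, hje⟩ := extremePoint_eq_of_combo (convex_seqBall hreg.empty_mem) he
    t wt z hw0 hw1 hzball hcm
  have hze : e ∈ ⋃ b ∈ T', D b := hje ▸ hz j hjt
  obtain ⟨b, hbT', heD⟩ := Set.mem_iUnion₂.1 hze
  have heC : e ∈ Cj ↑b := hDC b heD
  refine ⟨↑b, ?_, b.2⟩
  refine hpi (fun i hi => hballs i hi ?_)
  rw [Metric.mem_ball, dist_comm]
  exact lt_of_le_of_lt (heC i hi) (by linarith)

end Aux

/-- The extreme points of the dual unit ball of a combinatorial space `X_𝓕` are exactly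
the functionals `∑_{i∈F} θᵢ eᵢ*` with `F` a maximal member of `𝓕` and each `θᵢ` a sign. -/
theorem extremePoints_dual_ball {𝕜 : Type*} [RCLike 𝕜]
    (𝓕 : Set (Finset ℕ)) (hreg : RegularFamily 𝓕) :
    Set.extremePoints ℝ {g : (ℕ →₀ 𝕜) →ₗ[𝕜] 𝕜 | ∀ x : ℕ →₀ 𝕜, ‖g x‖ ≤ combNorm 𝓕 x} =
      {g | ∃ F : Finset ℕ, MaximalIn 𝓕 F ∧ ∃ θ : ℕ → 𝕜, (∀ i ∈ F, ‖θ i‖ = 1) ∧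
        g = ∑ i ∈ F, θ i • (Finsupp.lapply i : (ℕ →₀ 𝕜) →ₗ[𝕜] 𝕜)} := by
  apply Set.eq_of_subset_of_subset
  · intro g hg
    have hgB : ∀ x : ℕ →₀ 𝕜, ‖g x‖ ≤ combNorm 𝓕 x := hg.1
    have haB : toSeq g ∈ seqBall 𝕜 𝓕 := by
      intro x
      rw [liftSeq_toSeq g]
      exact hgB x
    have haext : toSeq g ∈ Set.extremePoints ℝ (seqBall 𝕜 𝓕) := by
      refine ⟨haB, ?_⟩
      intro a₁ h₁ a₂ h₂ hseg
      obtain ⟨s, t, hs, ht, hst, heq⟩ := hseg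
      have hm₁ : liftSeq a₁ ∈ {g' : (ℕ →₀ 𝕜) →ₗ[𝕜] 𝕜 |
          ∀ x : ℕ →₀ 𝕜, ‖g' x‖ ≤ combNorm 𝓕 x} := h₁
      have hm₂ : liftSeq a₂ ∈ {g' : (ℕ →₀ 𝕜) →ₗ[𝕜] 𝕜 |
          ∀ x : ℕ →₀ 𝕜, ‖g' x‖ ≤ combNorm 𝓕 x} := h₂
      have hgeq : s • liftSeq a₁ + t • liftSeq a₂ = g := by
        have hcl : liftSeq (s • a₁ + t • a₂) = liftSeq (toSeq g) := congrArg liftSeq heq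
        rw [liftSeq_toSeq] at hcl
        have hlin : liftSeq (s • a₁ + t • a₂)
            = s • liftSeq a₁ + t • liftSeq a₂ :=
          LinearMap.ext fun x => by
            rw [liftSeq_real_combo]
            rfl
        rw [hlin] at hcl
        exact hcl
      have hgseg : g ∈ openSegment ℝ (liftSeq a₁) (liftSeq a₂) :=
        ⟨s, t, hs, ht, hst, hgeq⟩
      have heqm := hg.2 hm₁ hm₂ hgseg
      rw [← toSeq_liftSeq a₁, heqm]
    have haK := extremePoints_seqBall_subset hreg haext
    obtain ⟨F, hF, θ, hθ, haeq⟩ := haK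
    have hgF : g = ∑ i ∈ F, θ i • (Finsupp.lapply i : (ℕ →₀ 𝕜) →ₗ[𝕜] 𝕜) := by
      refine eq_of_values fun i => ?_
      rw [sumF_single]
      exact congrFun haeq i
    have hFmax : MaximalIn 𝓕 F := by
      refine ⟨hF, ?_⟩
      intro G hG hFG
      by_contra hne
      obtain ⟨j, hjG, hjF⟩ := (Finset.ssubset_iff_of_subset hFG).1 (lt_of_le_of_ne hFG hne)
      have hjmem : insert j F ∈ 𝓕 := hreg.1 G hG _ (Finset.insert_subset hjG hFG)
      set h : (ℕ →₀ 𝕜) →ₗ[𝕜] 𝕜 := Finsupp.lapply j with hhdef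
      have hb : ∀ c : 𝕜, ‖c‖ ≤ 1 → ∀ x : ℕ →₀ 𝕜, ‖g x + c * x j‖ ≤ combNorm 𝓕 x := by
        intro c hc x
        have hgx : ‖g x‖ ≤ ∑ i ∈ F, ‖x i‖ := by
          rw [hgF, sumF_apply]
          refine le_trans (norm_sum_le _ _) (Finset.sum_le_sum fun i hi => ?_)
          rw [norm_mul, hθ i hi, one_mul]
        calc ‖g x + c * x j‖ ≤ ‖g x‖ + ‖c * x j‖ := norm_add_le _ _
          _ ≤ ∑ i ∈ F, ‖x i‖ + ‖x j‖ := by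
              refine add_le_add hgx ?_
              rw [norm_mul]
              exact le_trans (mul_le_mul_of_nonneg_right hc (norm_nonneg _)) (by rw [one_mul])
          _ = ∑ i ∈ insert j F, ‖x i‖ := by rw [Finset.sum_insert hjF]; ring
          _ ≤ combNorm 𝓕 x := le_combNorm hjmem x
      have hmem₁ : (g + h) ∈ {g' : (ℕ →₀ 𝕜) →ₗ[𝕜] 𝕜 |
          ∀ x : ℕ →₀ 𝕜, ‖g' x‖ ≤ combNorm 𝓕 x} := by
        intro x
        have := hb 1 (by norm_num) x
        rw [one_mul] at this
        simpa [hhdef, LinearMap.add_apply, Finsupp.lapply_apply] using this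
      have hmem₂ : (g - h) ∈ {g' : (ℕ →₀ 𝕜) →ₗ[𝕜] 𝕜 |
          ∀ x : ℕ →₀ 𝕜, ‖g' x‖ ≤ combNorm 𝓕 x} := by
        intro x
        have := hb (-1) (by norm_num) x
        rw [neg_one_mul] at this
        simpa [hhdef, LinearMap.sub_apply, Finsupp.lapply_apply, sub_eq_add_neg] using this
      have hseg : g ∈ openSegment ℝ (g + h) (g - h) := by
        refine ⟨1/2, 1/2, by norm_num, by norm_num, by norm_num, ?_⟩
        module
      have heqm := hg.2 hmem₁ hmem₂ hseg
      have hh0 : h = 0 := by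
        have h1 := heqm
        have := congrArg (fun k => k - g) h1
        simpa [add_sub_cancel_left] using this
      have h1 : (1 : 𝕜) = 0 := by
        have := congrArg (fun k : (ℕ →₀ 𝕜) →ₗ[𝕜] 𝕜 => k (Finsupp.single j 1)) hh0
        simpa [hhdef, Finsupp.lapply_apply] using this
      exact one_ne_zero h1
    exact ⟨F, hFmax, θ, hθ, hgF⟩
  · rintro g ⟨F, hmax, θ, hθ, rfl⟩
    exact maximal_mem_extremePoints hreg hmax hθ
end
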